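/- arXiv:1309.6125 — 3 statements merged into one kernel-verified Lean document; each statement's English description precedes it below -/
import Mathlib

section
/- Let μ be a finite positive Borel measure on [0,1) and let s>0. Then μ is an s-Carleson measure if and only if the sequence of moments μ_n = ∫_{[0,1)} t^n dμ(t) satisfies sup_{n≥0} (1+n)^s · μ_n < ∞. -/
open MeasureTheory Filter Topology

/-- The "p-th power mean" of `f` on the circle of radius `r`:
`(1/2π) ∫₀^{2π} ‖f(r e^{iθ})‖^p dθ`. -/
noncomputable def hpInt (p : ℝ) (f : ℂ → ℂ) (r : ℝ) : ℝ :=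
  (1 / (2 * Real.pi)) *
    ∫ θ in (0:ℝ)..(2 * Real.pi), ‖f ((r : ℂ) * Complex.exp ((θ : ℂ) * Complex.I))‖ ^ p

/-- The Hardy space norm `‖f‖_{H^p} = sup_{0 ≤ r < 1} M_p(r,f)`. -/
noncomputable def hpNorm (p : ℝ) (f : ℂ → ℂ) : ℝ :=
  ⨆ r : Set.Ico (0:ℝ) 1, hpInt p f (r : ℝ) ^ (1 / p)

/-- Membership in the Hardy space `H^p` of the unit disc. -/
def MemHp (p : ℝ) (f : ℂ → ℂ) : Prop :=
  DifferentiableOn ℂ f (Metric.ball 0 1) ∧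
    BddAbove (Set.range fun r : Set.Ico (0:ℝ) 1 => hpInt p f (r : ℝ) ^ (1 / p))

/-- `μ` (a measure on `[0,1)`) is an `s`-Carleson measure. -/
def IsCarleson (s : ℝ) (μ : Measure ℝ) : Prop :=
  ∃ C > 0, ∀ t ∈ Set.Ico (0:ℝ) 1, (μ (Set.Ico t 1)).toReal ≤ C * (1 - t) ^ s

/-- `μ` is a `1`-logarithmic `s`-Carleson measure. -/
def IsLogCarleson (s : ℝ) (μ : Measure ℝ) : Prop :=
  ∃ C > 0, ∀ t ∈ Set.Ico (0:ℝ) 1,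
    (μ (Set.Ico t 1)).toReal * Real.log (2 / (1 - t)) ≤ C * (1 - t) ^ s

/-- The `n`-th moment `μ_n = ∫_{[0,1)} t^n dμ(t)`. -/
noncomputable def moment (μ : Measure ℝ) (n : ℕ) : ℝ :=
  ∫ t in Set.Ico (0:ℝ) 1, t ^ n ∂μ

/-- The integral operator `I_μ(f)(z) = ∫_{[0,1)} f(t)/(1 - t z) dμ(t)`. -/
noncomputable def Imu (μ : Measure ℝ) (f : ℂ → ℂ) (z : ℂ) : ℂ :=
  ∫ t in Set.Ico (0:ℝ) 1, f (t : ℂ) / (1 - (t : ℂ) * z) ∂μ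

/-- `H_μ = I_μ` is a bounded operator from `H^p` into `H^q`. -/
def HmuBounded (μ : Measure ℝ) (p q : ℝ) : Prop :=
  ∃ C > 0, ∀ f : ℂ → ℂ, MemHp p f →
    MemHp q (Imu μ f) ∧ hpNorm q (Imu μ f) ≤ C * hpNorm p f

/-- `H_μ = I_μ` is a compact operator from `H^p` into `H^q`. -/
def HmuCompact (μ : Measure ℝ) (p q : ℝ) : Prop :=
  HmuBounded μ p q ∧
    ∀ f : ℕ → ℂ → ℂ, (∀ n, MemHp p (f n)) →
      (∃ M : ℝ, ∀ n, hpNorm p (f n) ≤ M) →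
      (∀ K : Set ℂ, K ⊆ Metric.ball 0 1 → IsCompact K →
        TendstoUniformlyOn (fun n => f n) (fun _ => (0:ℂ)) atTop K) →
      Tendsto (fun n => hpNorm q (Imu μ (f n))) atTop (𝓝 0)

/-- `∫_{[0,1-s)} dμ(t)/(1-t)`. -/
noncomputable def sweep (μ : Measure ℝ) (s : ℝ) : ENNReal :=
  ∫⁻ t in Set.Ico (0:ℝ) (1 - s), ENNReal.ofReal ((1 - t)⁻¹) ∂μ

/-- Condition (1.4): `∫₀¹ ( ∫_{[0,1-s)} dμ(t)/(1-t) )^e ds < ∞`. -/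
def IntCond (μ : Measure ℝ) (e : ℝ) : Prop :=
  ∫⁻ s in Set.Ioo (0:ℝ) 1, sweep μ s ^ e < ⊤



private lemma my_integrableOn_pow (μ : Measure ℝ) [IsFiniteMeasure μ] (k : ℕ) {a b : ℝ}
    (ha : 0 ≤ a) (hb : b ≤ 1) :
    IntegrableOn (fun t : ℝ => t ^ k) (Set.Ico a b) μ := by
  apply Measure.integrableOn_of_bounded (M := 1) (measure_ne_top _ _)
    (Measurable.aestronglyMeasurable (by fun_prop))
  filter_upwards [ae_restrict_mem measurableSet_Ico] with t ht
  have h0 : 0 ≤ t := le_trans ha ht.1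
  have h1 : t ≤ 1 := le_trans ht.2.le hb
  rw [Real.norm_eq_abs, abs_pow, abs_of_nonneg h0]
  exact pow_le_one₀ h0 h1

private lemma moment_nonneg (μ : Measure ℝ) (n : ℕ) : 0 ≤ moment μ n :=
  setIntegral_nonneg measurableSet_Ico fun _ ht => pow_nonneg ht.1 n

private lemma moment_le (μ : Measure ℝ) [IsFiniteMeasure μ] {k n : ℕ} (h : k ≤ n) :
    moment μ n ≤ moment μ k :=
  setIntegral_mono_on (my_integrableOn_pow μ n le_rfl le_rfl)
    (my_integrableOn_pow μ k le_rfl le_rfl)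
    measurableSet_Ico fun t ht => pow_le_pow_of_le_one ht.1 ht.2.le h

private lemma cheby (μ : Measure ℝ) [IsFiniteMeasure μ] {t : ℝ} (ht : t ∈ Set.Ico (0:ℝ) 1)
    (n : ℕ) : t ^ n * (μ (Set.Ico t 1)).toReal ≤ moment μ n := by
  have hsub : Set.Ico t 1 ⊆ Set.Ico (0:ℝ) 1 := Set.Ico_subset_Ico ht.1 le_rfl
  have h1 : t ^ n * (μ (Set.Ico t 1)).toReal = ∫ _ in Set.Ico t 1, t ^ n ∂μ := by
    rw [setIntegral_const]; rw [smul_eq_mul]; exact mul_comm _ _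
  rw [h1]
  calc ∫ _ in Set.Ico t 1, t ^ n ∂μ ≤ ∫ x in Set.Ico t 1, x ^ n ∂μ := by
        apply setIntegral_mono_on (integrableOn_const (measure_ne_top _ _))
          (my_integrableOn_pow μ n ht.1 le_rfl) measurableSet_Ico
        exact fun x hx => pow_le_pow_left₀ ht.1 hx.1 n
    _ ≤ moment μ n := by
        apply setIntegral_mono_set (my_integrableOn_pow μ n le_rfl le_rfl) ?_
          (HasSubset.Subset.eventuallyLE hsub)
        filter_upwards [ae_restrict_mem measurableSet_Ico] with x hx
        exact pow_nonneg hx.1 n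

private lemma moment_split (μ : Measure ℝ) [IsFiniteMeasure μ] {r : ℝ} (hr0 : 0 ≤ r)
    (hr1 : r < 1) (m : ℕ) :
    moment μ (2 * m) ≤ r ^ m * moment μ m + (μ (Set.Ico r 1)).toReal := by
  have hunion : Set.Ico (0:ℝ) 1 = Set.Ico 0 r ∪ Set.Ico r 1 :=
    (Set.Ico_union_Ico_eq_Ico hr0 hr1.le).symm
  have hdisj : Disjoint (Set.Ico (0:ℝ) r) (Set.Ico r 1) := Set.Ico_disjoint_Ico.mpr (by simp)
  rw [moment, hunion, setIntegral_union hdisj measurableSet_Ico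
    (my_integrableOn_pow μ _ le_rfl hr1.le) (my_integrableOn_pow μ _ hr0 le_rfl)]
  have part1 : ∫ t in Set.Ico (0:ℝ) r, t ^ (2*m) ∂μ ≤ r ^ m * moment μ m := by
    calc ∫ t in Set.Ico (0:ℝ) r, t ^ (2*m) ∂μ ≤ ∫ t in Set.Ico (0:ℝ) r, r ^ m * t ^ m ∂μ := by
          apply setIntegral_mono_on (my_integrableOn_pow μ _ le_rfl hr1.le)
            ((my_integrableOn_pow μ m le_rfl hr1.le).const_mul _) measurableSet_Ico
          intro t htm
          have : t ^ (2*m) = t ^ m * t ^ m := by rw [two_mul, pow_add]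
          rw [this]
          exact mul_le_mul_of_nonneg_right (pow_le_pow_left₀ htm.1 htm.2.le m)
            (pow_nonneg htm.1 m)
      _ = r ^ m * ∫ t in Set.Ico (0:ℝ) r, t ^ m ∂μ := integral_const_mul _ _
      _ ≤ r ^ m * moment μ m := by
          apply mul_le_mul_of_nonneg_left ?_ (pow_nonneg hr0 m)
          apply setIntegral_mono_set (my_integrableOn_pow μ m le_rfl le_rfl) ?_
            (HasSubset.Subset.eventuallyLE (Set.Ico_subset_Ico le_rfl hr1.le))
          filter_upwards [ae_restrict_mem measurableSet_Ico] with x hx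
          exact pow_nonneg hx.1 m
  have part2 : ∫ t in Set.Ico r 1, t ^ (2*m) ∂μ ≤ (μ (Set.Ico r 1)).toReal := by
    calc ∫ t in Set.Ico r 1, t ^ (2*m) ∂μ ≤ ∫ _ in Set.Ico r 1, (1:ℝ) ∂μ := by
          apply setIntegral_mono_on (my_integrableOn_pow μ _ hr0 le_rfl)
            (integrableOn_const (measure_ne_top _ _)) measurableSet_Ico
          exact fun t htm => pow_le_one₀ (le_trans hr0 htm.1) htm.2.le
      _ = (μ (Set.Ico r 1)).toReal := by rw [setIntegral_const, smul_eq_mul, mul_one]; rfl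
  linarith

/-- `μ` is an `s`-Carleson measure iff `sup_n (1+n)^s μ_n < ∞`. -/
theorem carleson_iff_moments (μ : Measure ℝ) [IsFiniteMeasure μ]
    (hsupp : μ ((Set.Ico (0:ℝ) 1)ᶜ) = 0) (s : ℝ) (hs : 0 < s) :
    IsCarleson s μ ↔ ∃ C : ℝ, ∀ n : ℕ, ((1 : ℝ) + n) ^ s * moment μ n ≤ C := by
  constructor
  · rintro ⟨C, hCpos, hCar⟩
    set c : ℝ := 2 * (s + 1) * Real.log 2 with hc
    have hlog2 : 0 < Real.log 2 := Real.log_pos one_lt_two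
    have hc0 : 0 < c := by positivity
    set n₀ : ℕ := ⌈c⌉₊ + 1 with hn₀
    set D : ℝ := 2 ^ s * c ^ s * C with hD
    have hDnn : 0 ≤ D := by positivity
    have h2s : (2:ℝ) ^ s * Real.exp (-(c/2)) = 1/2 := by
      rw [Real.rpow_def_of_pos two_pos, ← Real.exp_add]
      have : Real.log 2 * s + -(c/2) = -Real.log 2 := by rw [hc]; ring
      rw [this, Real.exp_neg, Real.exp_log two_pos]
      norm_num
    have key : ∀ n : ℕ, 2 * n₀ ≤ n →
        ((1:ℝ) + n) ^ s * moment μ n ≤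
          (1/2) * (((1:ℝ) + (n/2 : ℕ)) ^ s * moment μ (n/2)) + D := by
      intro n hn
      set m : ℕ := n / 2 with hm
      have hmn0 : n₀ ≤ m := by omega
      have hm1 : (1:ℕ) ≤ m := by omega
      have h2m : 2 * m ≤ n := by omega
      have hn2m : n ≤ 2 * m + 1 := by omega
      have hmR : (1:ℝ) ≤ (m:ℝ) := by exact_mod_cast hm1
      have hcm : c ≤ (m:ℝ) + 1 := by
        have h1 : c ≤ (⌈c⌉₊ : ℝ) := Nat.le_ceil c
        have h2 : ((⌈c⌉₊:ℕ) : ℝ) ≤ (m:ℝ) := by exact_mod_cast le_trans (by omega) hmn0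
        linarith
      have hm1pos : (0:ℝ) < (m:ℝ) + 1 := by positivity
      set r : ℝ := 1 - c / ((m:ℝ) + 1) with hr
      have hcd : 0 < c / ((m:ℝ) + 1) := by positivity
      have hr0 : 0 ≤ r := by
        have : c / ((m:ℝ) + 1) ≤ 1 := (div_le_one hm1pos).mpr hcm
        rw [hr]; linarith
      have hr1 : r < 1 := by simp only [hr]; linarith
      -- step C : r ^ m ≤ exp (-(c/2))
      have stepC : r ^ m ≤ Real.exp (-(c/2)) := by
        have e1 : r ≤ Real.exp (-(c / ((m:ℝ) + 1))) := by
          have := Real.add_one_le_exp (-(c / ((m:ℝ) + 1)))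
          simp only [hr]; linarith
        calc r ^ m ≤ Real.exp (-(c / ((m:ℝ) + 1))) ^ m := pow_le_pow_left₀ hr0 e1 m
          _ = Real.exp ((m:ℝ) * (-(c / ((m:ℝ) + 1)))) := (Real.exp_nat_mul _ m).symm
          _ ≤ Real.exp (-(c/2)) := by
              apply Real.exp_le_exp.mpr
              have hd : c = (c / ((m:ℝ)+1)) * ((m:ℝ)+1) := (div_mul_cancel₀ _ hm1pos.ne').symm
              nlinarith [hcd, hmR]
      -- step E : (1+n)^s ≤ 2^s * (1+m)^s
      have stepE : ((1:ℝ) + n) ^ s ≤ (2:ℝ) ^ s * ((1:ℝ) + m) ^ s := by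
        rw [← Real.mul_rpow two_pos.le (by positivity)]
        apply Real.rpow_le_rpow (by positivity) ?_ hs.le
        have : (n:ℝ) ≤ 2 * (m:ℝ) + 1 := by exact_mod_cast hn2m
        linarith
      have hmid : ((1:ℝ) + m) ^ s * (c / ((m:ℝ)+1)) ^ s = c ^ s := by
        rw [← Real.mul_rpow (by positivity) (le_of_lt hcd)]
        congr 1
        field_simp
        ring
      have hCr := hCar r ⟨hr0, hr1⟩
      have h1r : 1 - r = c / ((m:ℝ)+1) := by rw [hr]; ring
      have stepAB : moment μ n ≤ r ^ m * moment μ m + C * (c / ((m:ℝ)+1)) ^ s := by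
        calc moment μ n ≤ moment μ (2*m) := moment_le μ h2m
          _ ≤ r ^ m * moment μ m + (μ (Set.Ico r 1)).toReal := moment_split μ hr0 hr1 m
          _ ≤ r ^ m * moment μ m + C * (c / ((m:ℝ)+1)) ^ s := by rw [← h1r]; linarith
      have hmomn : 0 ≤ moment μ n := moment_nonneg μ n
      have hmomm : 0 ≤ moment μ m := moment_nonneg μ m
      calc ((1:ℝ) + n) ^ s * moment μ n
          ≤ ((2:ℝ) ^ s * ((1:ℝ) + m) ^ s) * moment μ n :=
            mul_le_mul_of_nonneg_right stepE hmomn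
        _ ≤ ((2:ℝ) ^ s * ((1:ℝ) + m) ^ s) * (r ^ m * moment μ m + C * (c / ((m:ℝ)+1)) ^ s) := by
            apply mul_le_mul_of_nonneg_left stepAB
            positivity
        _ = (2:ℝ) ^ s * r ^ m * (((1:ℝ) + m) ^ s * moment μ m)
              + (2:ℝ) ^ s * C * (((1:ℝ) + m) ^ s * (c / ((m:ℝ)+1)) ^ s) := by ring
        _ ≤ (2:ℝ) ^ s * Real.exp (-(c/2)) * (((1:ℝ) + m) ^ s * moment μ m)
              + (2:ℝ) ^ s * C * (((1:ℝ) + m) ^ s * (c / ((m:ℝ)+1)) ^ s) := by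
            have hXnn : (0:ℝ) ≤ ((1:ℝ) + m) ^ s * moment μ m := by positivity
            have h2snn : (0:ℝ) ≤ (2:ℝ) ^ s := by positivity
            have := mul_le_mul_of_nonneg_right
              (mul_le_mul_of_nonneg_left stepC h2snn) hXnn
            linarith
        _ = (1/2) * (((1:ℝ) + m) ^ s * moment μ m) + D := by
            rw [h2s, hmid, hD]; ring
    set M : ℝ := max (((1:ℝ) + 2*n₀) ^ s * moment μ 0) (2 * D) with hM
    refine ⟨M, ?_⟩
    intro n
    induction n using Nat.strong_induction_on with
    | _ n ih =>
      by_cases hn : 2 * n₀ ≤ n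
      · have hmlt : n / 2 < n := Nat.div_lt_self (by omega) one_lt_two
        have h1 := key n hn
        have h2 := ih _ hmlt
        have h3 : 2 * D ≤ M := le_max_right _ _
        linarith
      · push_neg at hn
        have h1 : moment μ n ≤ moment μ 0 := moment_le μ (Nat.zero_le n)
        have h2 : ((1:ℝ) + n) ^ s ≤ ((1:ℝ) + 2*n₀) ^ s := by
          apply Real.rpow_le_rpow (by positivity) ?_ hs.le
          have : (n:ℝ) ≤ (2*n₀ : ℕ) := by exact_mod_cast hn.le
          push_cast at this ⊢
          linarith
        calc ((1:ℝ) + n) ^ s * moment μ n ≤ ((1:ℝ) + 2*n₀) ^ s * moment μ 0 :=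
              mul_le_mul h2 h1 (moment_nonneg μ n) (by positivity)
          _ ≤ M := le_max_left _ _
  · rintro ⟨C, hC⟩
    have hC0 : 0 ≤ C := by
      have := hC 0
      simp only [Nat.cast_zero, add_zero, Real.one_rpow, one_mul] at this
      exact le_trans (moment_nonneg μ 0) this
    set T := (μ Set.univ).toReal with hT
    have hTnn : 0 ≤ T := ENNReal.toReal_nonneg
    refine ⟨Real.exp 3 * C + 2 ^ s * T + 1, by positivity, ?_⟩
    intro t ht
    have h1t : 0 < 1 - t := by linarith [ht.2]
    have hrpnn : (0:ℝ) ≤ (1 - t) ^ s := Real.rpow_nonneg h1t.le s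
    have hXnn : (0:ℝ) ≤ (μ (Set.Ico t 1)).toReal := ENNReal.toReal_nonneg
    by_cases hhalf : t < 1/2
    · have hb1 : (μ (Set.Ico t 1)).toReal ≤ T :=
        ENNReal.toReal_mono (measure_ne_top μ _) (measure_mono (Set.subset_univ _))
      have hb2 : (1:ℝ) ≤ 2 ^ s * (1 - t) ^ s := by
        rw [← Real.mul_rpow two_pos.le h1t.le]
        have h12 : (1:ℝ) ≤ 2 * (1 - t) := by linarith
        calc (1:ℝ) = 1 ^ s := (Real.one_rpow s).symm
          _ ≤ (2 * (1 - t)) ^ s := Real.rpow_le_rpow zero_le_one h12 hs.le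
      have h2snn : (0:ℝ) ≤ (2:ℝ) ^ s := by positivity
      have hec : (0:ℝ) ≤ Real.exp 3 * C := by positivity
      have hb3 : T ≤ T * (2 ^ s * (1 - t) ^ s) := by
        calc T = T * 1 := (mul_one T).symm
          _ ≤ T * (2 ^ s * (1 - t) ^ s) := mul_le_mul_of_nonneg_left hb2 hTnn
      nlinarith [mul_nonneg hec hrpnn, hrpnn]
    · push_neg at hhalf
      have ht0 : (0:ℝ) < t := lt_of_lt_of_le (by norm_num) hhalf
      set h : ℝ := 1 - t with hhdef
      have hh0 : 0 < h := h1t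
      have hh2 : h ≤ 1/2 := by simp only [hhdef]; linarith
      set n : ℕ := ⌈1/h⌉₊ with hn
      have hn1 : 1/h ≤ (n:ℝ) := Nat.le_ceil _
      have hn2 : (n:ℝ) ≤ 1/h + 1 := (Nat.ceil_lt_add_one (by positivity)).le
      have key1 : Real.exp (-(2*h)) ≤ t := by
        have e1 := Real.add_one_le_exp (2*h)
        rw [Real.exp_neg, inv_le_comm₀ (Real.exp_pos _) ht0]
        have htinv : t⁻¹ ≤ 1 + 2*h := by
          rw [inv_le_iff_one_le_mul₀ ht0]
          have htt : t = 1 - h := by rw [hhdef]; ring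
          nlinarith
        linarith
      have key2 : Real.exp (-3) ≤ t ^ n := by
        have hhn : h * n ≤ 3/2 := by
          calc h * n ≤ h * (1/h + 1) := by nlinarith
            _ = 1 + h := by field_simp
            _ ≤ 3/2 := by linarith
        calc Real.exp (-3) ≤ Real.exp ((n:ℝ) * (-(2*h))) := by
              apply Real.exp_le_exp.mpr; nlinarith
          _ = Real.exp (-(2*h)) ^ n := Real.exp_nat_mul _ n
          _ ≤ t ^ n := pow_le_pow_left₀ (Real.exp_pos _).le key1 n
      have hcheb := cheby μ (⟨ht0.le, ht.2⟩ : t ∈ Set.Ico (0:ℝ) 1) n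
      have hmom2 : moment μ n ≤ C * h ^ s := by
        have hmom : moment μ n * (1/h) ^ s ≤ C := by
          calc moment μ n * (1/h) ^ s ≤ moment μ n * ((1:ℝ)+n) ^ s := by
                apply mul_le_mul_of_nonneg_left ?_ (moment_nonneg μ n)
                apply Real.rpow_le_rpow (by positivity) (by linarith) hs.le
            _ = ((1:ℝ)+n) ^ s * moment μ n := mul_comm _ _
            _ ≤ C := hC n
        have hpow : ((1:ℝ)/h) ^ s * h ^ s = 1 := by
          rw [← Real.mul_rpow (by positivity) hh0.le, one_div, inv_mul_cancel₀ hh0.ne',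
            Real.one_rpow]
        calc moment μ n = (moment μ n * (1/h) ^ s) * h ^ s := by
              rw [mul_assoc, hpow, mul_one]
          _ ≤ C * h ^ s := mul_le_mul_of_nonneg_right hmom (Real.rpow_nonneg hh0.le s)
      have hfin : (μ (Set.Ico t 1)).toReal ≤ Real.exp 3 * moment μ n := by
        have hex : Real.exp (-3) * (μ (Set.Ico t 1)).toReal ≤ moment μ n :=
          le_trans (mul_le_mul_of_nonneg_right key2 hXnn) hcheb
        calc (μ (Set.Ico t 1)).toReal
            = Real.exp 3 * (Real.exp (-3) * (μ (Set.Ico t 1)).toReal) := by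
              rw [← mul_assoc, ← Real.exp_add]; norm_num
          _ ≤ Real.exp 3 * moment μ n :=
              mul_le_mul_of_nonneg_left hex (Real.exp_pos 3).le
      have hfs : (1 - t) ^ s = h ^ s := rfl
      have h2snn : (0:ℝ) ≤ (2:ℝ) ^ s := by positivity
      have hhs : (0:ℝ) ≤ h ^ s := Real.rpow_nonneg hh0.le s
      have he3 : (0:ℝ) < Real.exp 3 := Real.exp_pos 3
      rw [hfs]
      have hfin2 : (μ (Set.Ico t 1)).toReal ≤ Real.exp 3 * (C * h ^ s) :=
        le_trans hfin (mul_le_mul_of_nonneg_left hmom2 he3.le)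
      nlinarith [mul_nonneg (mul_nonneg h2snn hTnn) hhs, hhs]
end

section
/- Suppose 0<p≤1 and let μ be a finite positive Borel measure on [0,1). If for every f∈H^p and every z in the unit disc D the integral ∫_{[0,1)} |f(t)|/|1−tz| dμ(t) is finite (so that I_μ(f) is a well-defined analytic function on D for every f∈H^p), then μ is a (1/p)-Carleson measure. -/
open MeasureTheory Filter Topology

/- ### Auxiliary lemmas ### -/


lemma my_tsum_rpow_le {p : ℝ} (hp0 : 0 < p) (hp1 : p ≤ 1) (u : ℕ → ENNReal) :
    (∑' n, u n) ^ p ≤ ∑' n, u n ^ p := by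
  have hfin : ∀ s : Finset ℕ, (∑ n ∈ s, u n) ^ p ≤ ∑ n ∈ s, u n ^ p := by
    intro s
    classical
    induction s using Finset.induction with
    | empty => simp [ENNReal.zero_rpow_of_pos hp0]
    | insert _ _ hx ih =>
        rw [Finset.sum_insert hx, Finset.sum_insert hx]
        calc _ ≤ _ := ENNReal.rpow_add_le_add_rpow _ _ hp0.le hp1
        _ ≤ _ := by gcongr
  rw [← ENNReal.le_rpow_inv_iff hp0, ENNReal.tsum_eq_iSup_sum]
  refine iSup_le fun s => ?_
  rw [ENNReal.le_rpow_inv_iff hp0]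
  exact (hfin s).trans (ENNReal.sum_le_tsum s)

lemma my_one_sub_cos {x : ℝ} (h0 : 0 ≤ x) (hx : x ≤ Real.pi) :
    x ^ 2 / 6 ≤ 1 - Real.cos x := by
  have h1 : Real.cos (x/2) ^ 2 = 1 / 2 + Real.cos x / 2 := by
    have := Real.cos_sq (x/2)
    rwa [show 2 * (x/2) = x by ring] at this
  have h2 : Real.sin (x/2) ^ 2 + Real.cos (x/2) ^ 2 = 1 := Real.sin_sq_add_cos_sq _
  have h3 : 2 / Real.pi * (x/2) ≤ Real.sin (x/2) :=
    Real.mul_le_sin (by linarith) (by linarith)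
  have hpi : Real.pi ≤ 3.15 := by
    have := Real.pi_lt_d2
    linarith
  have hpi0 : 0 < Real.pi := Real.pi_pos
  have h4 : x / Real.pi ≤ Real.sin (x/2) := by
    calc x / Real.pi = 2 / Real.pi * (x/2) := by ring
    _ ≤ _ := h3
  have h5 : (x / Real.pi) ^ 2 ≤ Real.sin (x/2) ^ 2 := by
    apply sq_le_sq' <;> nlinarith [div_nonneg h0 hpi0.le]
  have h6 : x ^ 2 / Real.pi ^ 2 ≤ Real.sin (x/2) ^ 2 := by
    rw [← div_pow]; exact h5
  have hpisq : Real.pi ^ 2 ≤ 12 := by nlinarith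
  have h7 : x ^ 2 / 12 ≤ x ^ 2 / Real.pi ^ 2 :=
    div_le_div_of_nonneg_left (sq_nonneg x) (by positivity) hpisq
  linarith



lemma my_normsq_eq (s θ : ℝ) :
    ‖(1:ℂ) - (s:ℂ) * Complex.exp ((θ:ℂ) * Complex.I)‖^2
      = (1 - s * Real.cos θ)^2 + (s * Real.sin θ)^2 := by
  rw [← Complex.normSq_eq_norm_sq, Complex.normSq_apply]
  simp [Complex.exp_ofReal_mul_I_re, Complex.exp_ofReal_mul_I_im, Complex.sub_re, Complex.sub_im,
    Complex.mul_re, Complex.mul_im]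
  ring

lemma my_normsq_lower {s θ : ℝ} (hs0 : 0 ≤ s) (hs1 : s < 1) (hθ0 : 0 ≤ θ) (hθ : θ ≤ 2*Real.pi) :
    (1-s)^2 + s/3 * (min θ (2*Real.pi - θ))^2
      ≤ ‖(1:ℂ) - (s:ℂ) * Complex.exp ((θ:ℂ) * Complex.I)‖^2 := by
  rw [my_normsq_eq]
  have hpyth := Real.sin_sq_add_cos_sq θ
  rcases le_total θ Real.pi with hcase | hcase
  · have hmin : min θ (2*Real.pi - θ) = θ := min_eq_left (by linarith)
    have hcos := my_one_sub_cos hθ0 hcase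
    rw [hmin]
    nlinarith [mul_le_mul_of_nonneg_left hcos hs0]
  · have hmin : min θ (2*Real.pi - θ) = 2*Real.pi - θ := min_eq_right (by linarith)
    have hcos' := my_one_sub_cos (x := 2*Real.pi - θ) (by linarith) (by linarith)
    rw [Real.cos_two_pi_sub] at hcos'
    rw [hmin]
    nlinarith [mul_le_mul_of_nonneg_left hcos' hs0]

lemma my_arctan_integral {b : ℝ} (hb : 0 < b) :
    ∫ θ in (0:ℝ)..(2*Real.pi), (b^2 + θ^2)⁻¹ ≤ Real.pi/(2*b) := by
  have hcont : Continuous fun θ : ℝ => (b^2 + θ^2)⁻¹ := by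
    refine (continuous_const.add (continuous_pow 2)).inv₀ fun θ => (by positivity : (0:ℝ) < b^2 + θ^2).ne'
  have hd : ∀ θ : ℝ, HasDerivAt (fun x => b⁻¹ * Real.arctan (x / b)) ((b^2+θ^2)⁻¹) θ := by
    intro θ
    have h1 : HasDerivAt (fun x : ℝ => x / b) (1/b) θ := by
      simpa using (hasDerivAt_id θ).div_const b
    have h2 := (Real.hasDerivAt_arctan (θ/b)).comp θ h1
    have h3 := h2.const_mul b⁻¹
    refine h3.congr_deriv ?_
    field_simp
  rw [intervalIntegral.integral_eq_sub_of_hasDerivAt (fun θ _ => hd θ)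
    (hcont.intervalIntegrable _ _)]
  have h4 : Real.arctan (2*Real.pi/b) ≤ Real.pi/2 := (Real.arctan_lt_pi_div_two _).le
  have h5 : (0:ℝ) ≤ Real.arctan (2*Real.pi/b) := by rw [← Real.arctan_zero]; exact Real.arctan_strictMono.monotone (by positivity)
  simp only [zero_div, Real.arctan_zero, mul_zero, sub_zero]
  rw [div_eq_mul_inv Real.pi (2*b)]
  calc b⁻¹ * Real.arctan (2*Real.pi/b) ≤ b⁻¹ * (Real.pi/2) := by
        exact mul_le_mul_of_nonneg_left h4 (by positivity)

  _ = Real.pi * (2*b)⁻¹ := by rw [mul_inv]; ring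

lemma my_norm_one_sub_ge {s : ℝ} (hs0 : 0 ≤ s) (θ : ℝ) :
    1 - s ≤ ‖(1:ℂ) - (s:ℂ) * Complex.exp ((θ:ℂ) * Complex.I)‖ := by
  have h1 : ‖((s:ℂ) * Complex.exp ((θ:ℂ) * Complex.I))‖ = s := by
    rw [norm_mul, Complex.norm_exp_ofReal_mul_I,
      Complex.norm_real, Real.norm_eq_abs, abs_of_nonneg hs0, mul_one]
  calc 1 - s = ‖(1:ℂ)‖ - ‖((s:ℂ) * Complex.exp ((θ:ℂ) * Complex.I))‖ := by rw [h1, norm_one]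
  _ ≤ _ := norm_sub_norm_le _ _

lemma my_circle_lintegral {s : ℝ} (hs0 : 0 ≤ s) (hs1 : s < 1) :
    ∫⁻ θ in Set.Ioc (0:ℝ) (2*Real.pi),
      ENNReal.ofReal ((‖(1:ℂ) - (s:ℂ) * Complex.exp ((θ:ℂ) * Complex.I)‖^2)⁻¹)
      ≤ ENNReal.ofReal (16*Real.pi/(1-s)) := by
  have hb : 0 < 1 - s := by linarith
  have hpi := Real.pi_pos
  rcases le_or_gt s (1/2) with hcase | hcase
  · have hpt : ∀ θ ∈ Set.Ioc (0:ℝ) (2*Real.pi),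
        ENNReal.ofReal ((‖(1:ℂ) - (s:ℂ) * Complex.exp ((θ:ℂ) * Complex.I)‖^2)⁻¹)
        ≤ ENNReal.ofReal 4 := by
      intro θ _
      apply ENNReal.ofReal_le_ofReal
      have h1 := my_norm_one_sub_ge hs0 θ
      have h2 : (1:ℝ)/2 ≤ ‖(1:ℂ) - (s:ℂ) * Complex.exp ((θ:ℂ) * Complex.I)‖ := by linarith
      have h3 : (1:ℝ)/4 ≤ ‖(1:ℂ) - (s:ℂ) * Complex.exp ((θ:ℂ) * Complex.I)‖^2 := by nlinarith
      rw [show (4:ℝ) = ((1:ℝ)/4)⁻¹ by norm_num]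
      exact inv_anti₀ (by norm_num) h3
    calc _ ≤ ∫⁻ _ in Set.Ioc (0:ℝ) (2*Real.pi), ENNReal.ofReal 4 :=
          setLIntegral_mono measurable_const hpt
    _ = ENNReal.ofReal 4 * volume (Set.Ioc (0:ℝ) (2*Real.pi)) := setLIntegral_const _ _
    _ = ENNReal.ofReal 4 * ENNReal.ofReal (2*Real.pi) := by
          rw [Real.volume_Ioc]; norm_num
    _ = ENNReal.ofReal (8*Real.pi) := by
          rw [← ENNReal.ofReal_mul (by norm_num)]; ring_nf
    _ ≤ _ := by
          apply ENNReal.ofReal_le_ofReal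
          rw [le_div_iff₀ hb]; nlinarith
  · set b := 1 - s with hbdef
    set G : ℝ → ℝ := fun θ => 6*((b^2+θ^2)⁻¹ + (b^2+(2*Real.pi-θ)^2)⁻¹) with hG
    have hGcont : Continuous G := by
      apply Continuous.mul continuous_const
      apply Continuous.add
      · exact (continuous_const.add (continuous_pow 2)).inv₀ fun θ => (by positivity : (0:ℝ) < b^2 + θ^2).ne'
      · exact (continuous_const.add (((continuous_const.sub continuous_id).pow 2))).inv₀
          fun θ => (by positivity : (0:ℝ) < b^2 + (2*Real.pi-θ)^2).ne'
    have hpt : ∀ θ ∈ Set.Ioc (0:ℝ) (2*Real.pi),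
        ENNReal.ofReal ((‖(1:ℂ) - (s:ℂ) * Complex.exp ((θ:ℂ) * Complex.I)‖^2)⁻¹)
        ≤ ENNReal.ofReal (G θ) := by
      intro θ hθ
      apply ENNReal.ofReal_le_ofReal
      set d := min θ (2*Real.pi - θ) with hd
      have hQ := my_normsq_lower hs0 hs1 hθ.1.le hθ.2
      have hQpos : 0 < (1-s)^2 + s/3 * d^2 := by positivity
      have step1 : (‖(1:ℂ) - (s:ℂ) * Complex.exp ((θ:ℂ) * Complex.I)‖^2)⁻¹
          ≤ ((1-s)^2 + s/3 * d^2)⁻¹ := inv_anti₀ hQpos hQ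
      have step2 : ((1-s)^2 + s/3 * d^2)⁻¹ ≤ 6 * ((b^2 + d^2)⁻¹) := by
        rw [show (6:ℝ) * ((b^2+d^2)⁻¹) = ((b^2+d^2)/6)⁻¹ by rw [inv_div]; ring]
        apply inv_anti₀ (by positivity)
        have : d^2/6 ≤ s/3 * d^2 := by nlinarith [sq_nonneg d]
        have hb2 : b^2/6 ≤ b^2 := by nlinarith [sq_nonneg b]
        calc (b^2+d^2)/6 = b^2/6 + d^2/6 := by ring
        _ ≤ (1-s)^2 + s/3*d^2 := by rw [hbdef] at *; linarith
      have step3 : 6 * ((b^2 + d^2)⁻¹) ≤ G θ := by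
        rw [hG]
        rcases min_cases θ (2*Real.pi - θ) with ⟨hmin, _⟩ | ⟨hmin, _⟩ <;>
          rw [hd, hmin] <;>
          have i1 : (0:ℝ) ≤ (b^2+θ^2)⁻¹ := by positivity
        all_goals have i2 : (0:ℝ) ≤ (b^2+(2*Real.pi-θ)^2)⁻¹ := by positivity
        · nlinarith
        · nlinarith
      linarith
    calc _ ≤ ∫⁻ θ in Set.Ioc (0:ℝ) (2*Real.pi), ENNReal.ofReal (G θ) :=
          setLIntegral_mono (hGcont.measurable.ennreal_ofReal) hpt
    _ = ENNReal.ofReal (∫ θ in Set.Ioc (0:ℝ) (2*Real.pi), G θ) := by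
          rw [ofReal_integral_eq_lintegral_ofReal
            (hGcont.integrableOn_Ioc)
            (Eventually.of_forall fun θ => by positivity)]
    _ ≤ _ := by
          apply ENNReal.ofReal_le_ofReal
          rw [← intervalIntegral.integral_of_le (by positivity)]
          have hint1 : IntervalIntegrable (fun θ : ℝ => (b^2+θ^2)⁻¹) volume 0 (2*Real.pi) :=
            ((continuous_const.add (continuous_pow 2)).inv₀ fun θ => (by positivity : (0:ℝ) < b^2 + θ^2).ne'
              ).intervalIntegrable _ _
          have hint2 : IntervalIntegrable (fun θ : ℝ => (b^2+(2*Real.pi-θ)^2)⁻¹) volume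
              0 (2*Real.pi) :=
            ((continuous_const.add (((continuous_const.sub continuous_id).pow 2))).inv₀
              (fun θ => (by positivity : (0:ℝ) < b^2 + (2*Real.pi-θ)^2).ne')).intervalIntegrable _ _
          rw [hG]
          rw [intervalIntegral.integral_const_mul, intervalIntegral.integral_add hint1 hint2]
          have hA : ∫ θ in (0:ℝ)..(2*Real.pi), (b^2+θ^2)⁻¹ ≤ Real.pi/(2*b) :=
            my_arctan_integral hb
          have hBeq : (∫ θ in (0:ℝ)..(2*Real.pi), (b^2+(2*Real.pi-θ)^2)⁻¹)
              = ∫ θ in (0:ℝ)..(2*Real.pi), (b^2+θ^2)⁻¹ := by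
            have := intervalIntegral.integral_comp_sub_left
              (a := (0:ℝ)) (b := 2*Real.pi) (fun x : ℝ => (b^2+x^2)⁻¹) (2*Real.pi)
            simpa using this
          rw [hBeq]
          calc 6 * ((∫ θ in (0:ℝ)..(2*Real.pi), (b^2+θ^2)⁻¹)
                + ∫ θ in (0:ℝ)..(2*Real.pi), (b^2+θ^2)⁻¹)
              ≤ 6 * (Real.pi/(2*b) + Real.pi/(2*b)) := by linarith
          _ = 6*Real.pi/b := by field_simp; ring
          _ ≤ 16*Real.pi/b := by gcongr; nlinarith

lemma my_circle_rpow {s a : ℝ} (hs0 : 0 ≤ s) (hs1 : s < 1) (ha : 2 ≤ a) :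
    ∫⁻ θ in Set.Ioc (0:ℝ) (2*Real.pi),
      ENNReal.ofReal ((‖(1:ℂ) - (s:ℂ) * Complex.exp ((θ:ℂ) * Complex.I)‖ ^ a)⁻¹)
      ≤ ENNReal.ofReal (16*Real.pi * (1-s)^(1-a)) := by
  have hb : 0 < 1 - s := by linarith
  have hpt : ∀ θ : ℝ,
      ENNReal.ofReal ((‖(1:ℂ) - (s:ℂ) * Complex.exp ((θ:ℂ) * Complex.I)‖ ^ a)⁻¹)
      ≤ ENNReal.ofReal ((1-s)^(2-a)) *
        ENNReal.ofReal ((‖(1:ℂ) - (s:ℂ) * Complex.exp ((θ:ℂ) * Complex.I)‖ ^ 2)⁻¹) := by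
    intro θ
    rw [← ENNReal.ofReal_mul (by positivity)]
    apply ENNReal.ofReal_le_ofReal
    set m := ‖(1:ℂ) - (s:ℂ) * Complex.exp ((θ:ℂ) * Complex.I)‖ with hm
    have hm1 : 1 - s ≤ m := my_norm_one_sub_ge hs0 θ
    have hm0 : 0 < m := lt_of_lt_of_le hb hm1
    have key : m ^ 2 * (1-s)^(a-2) ≤ m ^ a := by
      have h1 : m ^ a = m ^ 2 * m ^ (a-2) := by
        rw [← Real.rpow_natCast m 2, ← Real.rpow_add hm0]
        norm_num
      rw [h1]
      have := Real.rpow_le_rpow hb.le hm1 (by linarith : (0:ℝ) ≤ a - 2)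
      nlinarith [pow_nonneg hm0.le 2, sq_nonneg m, Real.rpow_nonneg hb.le (a-2)]
    have hma : 0 < m ^ a := Real.rpow_pos_of_pos hm0 a
    calc (m ^ a)⁻¹ ≤ (m ^ 2 * (1-s)^(a-2))⁻¹ := inv_anti₀ (by positivity) key
    _ = (1-s)^(2-a) * (m^2)⁻¹ := by
        rw [mul_inv, ← Real.rpow_neg hb.le, neg_sub]
        ring
  calc _ ≤ ∫⁻ θ in Set.Ioc (0:ℝ) (2*Real.pi), ENNReal.ofReal ((1-s)^(2-a)) *
        ENNReal.ofReal ((‖(1:ℂ) - (s:ℂ) * Complex.exp ((θ:ℂ) * Complex.I)‖ ^ 2)⁻¹) :=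
        lintegral_mono fun θ => hpt θ
  _ = ENNReal.ofReal ((1-s)^(2-a)) * ∫⁻ θ in Set.Ioc (0:ℝ) (2*Real.pi),
        ENNReal.ofReal ((‖(1:ℂ) - (s:ℂ) * Complex.exp ((θ:ℂ) * Complex.I)‖ ^ 2)⁻¹) :=
        lintegral_const_mul' _ _ ENNReal.ofReal_ne_top
  _ ≤ ENNReal.ofReal ((1-s)^(2-a)) * ENNReal.ofReal (16*Real.pi/(1-s)) := by
        gcongr
        exact my_circle_lintegral hs0 hs1
  _ = _ := by
        rw [← ENNReal.ofReal_mul (by positivity)]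
        congr 1
        rw [show (1:ℝ)-a = (2-a) + (-1) by ring, Real.rpow_add hb, Real.rpow_neg_one]
        field_simp


/-- if `I_μ(f)` is well defined for every `f ∈ H^p` (`0<p≤1`),
then `μ` is a `1/p`-Carleson measure. -/
theorem carleson_of_Imu_welldefined (p : ℝ) (hp0 : 0 < p) (hp1 : p ≤ 1)
    (μ : Measure ℝ) [IsFiniteMeasure μ] (hsupp : μ ((Set.Ico (0:ℝ) 1)ᶜ) = 0)
    (h : ∀ f : ℂ → ℂ, MemHp p f → ∀ z ∈ Metric.ball (0:ℂ) 1,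
      IntegrableOn (fun t : ℝ => f (t : ℂ) / (1 - (t : ℂ) * z)) (Set.Ico (0:ℝ) 1) μ) :
    IsCarleson (1/p) μ := by
  by_contra hC
  rw [IsCarleson] at hC
  push_neg at hC
  have hpi := Real.pi_pos
  -- basic exponent facts
  have hp2 : (2:ℝ) ≤ 2/p := by
    rw [le_div_iff₀ hp0]; nlinarith
  set N : ℕ := ⌈2/p⌉₊ with hNdef
  have hNge : 2/p ≤ (N:ℝ) := Nat.le_ceil _
  have hNp : 2 ≤ (N:ℝ) * p := by
    calc (2:ℝ) = (2/p) * p := by field_simp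
    _ ≤ (N:ℝ)*p := mul_le_mul_of_nonneg_right hNge hp0.le
  have hN1p : 1/p ≤ (N:ℝ) := by
    have h12 : (1:ℝ)/p ≤ 2/p := by gcongr <;> norm_num
    linarith
  -- choose the sequence T
  choose T hT1 hT2 using fun n : ℕ =>
    hC ((2:ℝ)^N * ((n:ℝ)+1)^((4:ℝ)/p)) (by positivity)
  have hT0 : ∀ n, 0 ≤ T n := fun n => (hT1 n).1
  have hTlt : ∀ n, T n < 1 := fun n => (hT1 n).2
  -- the test function
  set lam : ℕ → ℝ := fun n => ((n:ℝ)+1) ^ (-(2/p)) with hlamdef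
  set dd : ℕ → ℝ := fun n => lam n * (1 - T n) ^ ((N:ℝ) - 1/p) with hdddef
  set F : ℕ → ℂ → ℂ := fun n z => ((dd n : ℝ) : ℂ) * (((1:ℂ) - ((T n : ℝ) : ℂ) * z) ^ N)⁻¹
    with hFdef
  set f : ℂ → ℂ := fun z => ∑' n, F n z with hfdef
  have hA1 : ∀ n : ℕ, (1:ℝ) ≤ (n:ℝ)+1 := fun n => by have : (0:ℝ) ≤ (n:ℝ) := Nat.cast_nonneg n; linarith
  have hlam_pos : ∀ n, 0 < lam n := fun n => Real.rpow_pos_of_pos (by positivity) _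
  have hlam_le1 : ∀ n, lam n ≤ 1 := fun n =>
    Real.rpow_le_one_of_one_le_of_nonpos (hA1 n) (by rw [neg_nonpos]; positivity)
  have hx_pos : ∀ n, 0 < 1 - T n := fun n => by linarith [hTlt n]
  have hdd_pos : ∀ n, 0 < dd n := fun n =>
    mul_pos (hlam_pos n) (Real.rpow_pos_of_pos (hx_pos n) _)
  have hdd_le : ∀ n, dd n ≤ lam n := by
    intro n
    have h1 : (1 - T n) ^ ((N:ℝ) - 1/p) ≤ 1 :=
      Real.rpow_le_one (hx_pos n).le (by linarith [hT0 n]) (by linarith [hN1p])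
    calc dd n ≤ lam n * 1 := mul_le_mul_of_nonneg_left h1 (hlam_pos n).le
    _ = lam n := mul_one _
  have hlamp : ∀ n, lam n ^ p = ((n:ℝ)+1) ^ (-(2:ℝ)) := by
    intro n
    show (((n:ℝ)+1) ^ (-(2/p))) ^ p = _
    rw [← Real.rpow_mul (by positivity)]
    congr 1
    field_simp
  have hlamp_sum : Summable (fun n => lam n ^ p) := by
    have h2 : Summable (fun n : ℕ => ((n:ℝ)+1) ^ (-(2:ℝ))) := by
      have hbase : Summable (fun n : ℕ => ((n:ℝ) ^ (2:ℝ))⁻¹) :=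
        Real.summable_nat_rpow_inv.mpr one_lt_two
      have := (summable_nat_add_iff 1).mpr hbase
      apply this.congr
      intro n
      push_cast
      rw [← Real.rpow_neg (by positivity)]
    exact h2.congr fun n => (hlamp n).symm
  have hlam_sum : Summable lam := by
    refine Summable.of_nonneg_of_le (fun n => (hlam_pos n).le) (fun n => ?_) hlamp_sum
    rw [hlamp]
    exact Real.rpow_le_rpow_of_exponent_le (hA1 n) (by linarith)
  set L : ℝ := ∑' n, lam n ^ p with hLdef
  have hL0 : 0 ≤ L := tsum_nonneg fun n => Real.rpow_nonneg (hlam_pos n).le p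
  -- norm facts
  have hden_ge : ∀ (n : ℕ) (z : ℂ), 1 - ‖z‖ ≤ ‖(1:ℂ) - ((T n : ℝ) : ℂ) * z‖ := by
    intro n z
    have h1 : ‖((T n : ℝ) : ℂ) * z‖ ≤ ‖z‖ := by
      rw [norm_mul, Complex.norm_real, Real.norm_eq_abs, abs_of_nonneg (hT0 n)]
      calc T n * ‖z‖ ≤ 1 * ‖z‖ := by
            exact mul_le_mul_of_nonneg_right (hTlt n).le (norm_nonneg z)
      _ = ‖z‖ := one_mul _
    calc 1 - ‖z‖ ≤ ‖(1:ℂ)‖ - ‖((T n : ℝ) : ℂ) * z‖ := by rw [norm_one]; linarith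
    _ ≤ _ := norm_sub_norm_le _ _
  have hden_ne : ∀ (n : ℕ) (z : ℂ), ‖z‖ < 1 → (1:ℂ) - ((T n : ℝ) : ℂ) * z ≠ 0 := by
    intro n z hz
    intro hzero
    have := hden_ge n z
    rw [hzero, norm_zero] at this
    linarith
  have hFnorm : ∀ (n : ℕ) (z : ℂ),
      ‖F n z‖ = dd n * (‖(1:ℂ) - ((T n : ℝ) : ℂ) * z‖ ^ N)⁻¹ := by
    intro n z
    rw [hFdef]
    rw [norm_mul, norm_inv, norm_pow, Complex.norm_real, Real.norm_eq_abs,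
      abs_of_pos (hdd_pos n)]
  have hFbound : ∀ (n : ℕ) (z : ℂ) (ρ : ℝ), ρ < 1 → ‖z‖ ≤ ρ →
      ‖F n z‖ ≤ lam n * ((1-ρ) ^ N)⁻¹ := by
    intro n z ρ hρ hzρ
    rw [hFnorm]
    have h0 : 0 < 1 - ρ := by linarith
    have h1 : 1 - ρ ≤ ‖(1:ℂ) - ((T n : ℝ) : ℂ) * z‖ := le_trans (by linarith) (hden_ge n z)
    have h2 : (1-ρ)^N ≤ ‖(1:ℂ) - ((T n : ℝ) : ℂ) * z‖ ^ N := pow_le_pow_left₀ h0.le h1 N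
    have h3 : (‖(1:ℂ) - ((T n : ℝ) : ℂ) * z‖ ^ N)⁻¹ ≤ ((1-ρ)^N)⁻¹ :=
      inv_anti₀ (by positivity) h2
    exact mul_le_mul (hdd_le n) h3 (by positivity) (hlam_pos n).le
  -- differentiability
  have hdiff : DifferentiableOn ℂ f (Metric.ball 0 1) := by
    intro z₀ hz₀
    rw [Metric.mem_ball, dist_zero_right] at hz₀
    set ρ := (1 + ‖z₀‖)/2 with hρdef
    have hρ1 : ρ < 1 := by rw [hρdef]; linarith
    have hz₀ρ : ‖z₀‖ < ρ := by rw [hρdef]; linarith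
    have hsub : DifferentiableOn ℂ f (Metric.ball 0 ρ) := by
      rw [hfdef]
      apply Complex.differentiableOn_tsum_of_summable_norm
        (u := fun n => lam n * ((1-ρ) ^ N)⁻¹) (hlam_sum.mul_right _)
      · intro n
        apply DifferentiableOn.const_mul
        apply DifferentiableOn.inv
        · exact (DifferentiableOn.pow (by fun_prop) N)
        · intro z hz
          rw [Metric.mem_ball, dist_zero_right] at hz
          exact pow_ne_zero _ (hden_ne n z (lt_trans hz hρ1))
      · exact Metric.isOpen_ball
      · intro n w hw
        rw [Metric.mem_ball, dist_zero_right] at hw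
        exact hFbound n w ρ hρ1 hw.le
    have hmem : z₀ ∈ Metric.ball (0:ℂ) ρ := by
      rw [Metric.mem_ball, dist_zero_right]; exact hz₀ρ
    exact (hsub.differentiableAt (Metric.isOpen_ball.mem_nhds hmem)).differentiableWithinAt
  have hcontOn : ContinuousOn f (Metric.ball 0 1) := hdiff.continuousOn
  set a : ℝ := (N:ℝ) * p with hadef
  -- the H^p integral bound
  have key : ∀ r : ℝ, 0 ≤ r → r < 1 → hpInt p f r ≤ (1/(2*Real.pi)) * (16*Real.pi*L) := by
    intro r hr0 hr1
    set c : ℝ → ℂ := fun θ => (r:ℂ) * Complex.exp ((θ:ℂ) * Complex.I) with hcdef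
    have hcnorm : ∀ θ, ‖c θ‖ = r := by
      intro θ
      rw [hcdef]
      simp only [norm_mul, Complex.norm_real,
        Complex.norm_exp_ofReal_mul_I, Real.norm_eq_abs, abs_of_nonneg hr0, mul_one]
    have hcmem : ∀ θ, c θ ∈ Metric.ball (0:ℂ) 1 := by
      intro θ; rw [Metric.mem_ball, dist_zero_right, hcnorm]; exact hr1
    have hccont : Continuous c := by fun_prop
    have hfc : Continuous fun θ => f (c θ) :=
      hcontOn.comp_continuous hccont hcmem
    have hgcont : Continuous fun θ => ‖f (c θ)‖ ^ p :=
      (hfc.norm).rpow_const fun θ => Or.inr hp0.le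
    -- summability of norms at a point on the circle
    have hsumnorm : ∀ θ : ℝ, Summable fun n => ‖F n (c θ)‖ := by
      intro θ
      refine Summable.of_nonneg_of_le (fun n => norm_nonneg _) (fun n => ?_)
        (hlam_sum.mul_right ((1-r)^N)⁻¹)
      exact hFbound n (c θ) r hr1 (hcnorm θ).le
    -- the terms on the circle
    set v : ℕ → ℝ → ℝ := fun n θ => dd n ^ p *
      ((‖(1:ℂ) - ((T n * r : ℝ) : ℂ) * Complex.exp ((θ:ℂ) * Complex.I)‖ ^ a)⁻¹) with hvdef
    have hsr : ∀ n : ℕ, 0 ≤ T n * r ∧ T n * r < 1 := by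
      intro n
      constructor
      · exact mul_nonneg (hT0 n) hr0
      · calc T n * r ≤ T n * 1 := mul_le_mul_of_nonneg_left hr1.le (hT0 n)
        _ < 1 := by rw [mul_one]; exact hTlt n
    have hsnorm_pos : ∀ (n : ℕ) (θ : ℝ),
        0 < ‖(1:ℂ) - ((T n * r : ℝ) : ℂ) * Complex.exp ((θ:ℂ) * Complex.I)‖ := by
      intro n θ
      have := my_norm_one_sub_ge (hsr n).1 θ
      linarith [(hsr n).2]
    have hveq : ∀ (n : ℕ) (θ : ℝ), ‖F n (c θ)‖ ^ p = v n θ := by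
      intro n θ
      have hcast : (1:ℂ) - ((T n : ℝ) : ℂ) * c θ
          = (1:ℂ) - ((T n * r : ℝ) : ℂ) * Complex.exp ((θ:ℂ) * Complex.I) := by
        rw [hcdef]; push_cast; ring
      rw [hFnorm, hcast]
      set m := ‖(1:ℂ) - ((T n * r : ℝ) : ℂ) * Complex.exp ((θ:ℂ) * Complex.I)‖ with hmdef
      have hm0 : 0 < m := hsnorm_pos n θ
      rw [Real.mul_rpow (hdd_pos n).le (by positivity),
        Real.inv_rpow (by positivity), ← Real.rpow_natCast m N,
        ← Real.rpow_mul hm0.le]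
    -- pointwise bound in ENNReal
    have hptw : ∀ θ : ℝ, ENNReal.ofReal (‖f (c θ)‖ ^ p)
        ≤ ∑' n, ENNReal.ofReal (v n θ) := by
      intro θ
      have h2 : ‖f (c θ)‖ ≤ ∑' n, ‖F n (c θ)‖ := by
        rw [hfdef]
        exact norm_tsum_le_tsum_norm (hsumnorm θ)
      have h3 : ‖f (c θ)‖ ^ p ≤ (∑' n, ‖F n (c θ)‖) ^ p :=
        Real.rpow_le_rpow (norm_nonneg _) h2 hp0.le
      calc ENNReal.ofReal (‖f (c θ)‖ ^ p) ≤ ENNReal.ofReal ((∑' n, ‖F n (c θ)‖) ^ p) :=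
            ENNReal.ofReal_le_ofReal h3
      _ = (ENNReal.ofReal (∑' n, ‖F n (c θ)‖)) ^ p := by
            rw [← ENNReal.ofReal_rpow_of_nonneg (tsum_nonneg fun n => norm_nonneg _) hp0.le]
      _ = (∑' n, ENNReal.ofReal ‖F n (c θ)‖) ^ p := by
            rw [ENNReal.ofReal_tsum_of_nonneg (fun n => norm_nonneg _) (hsumnorm θ)]
      _ ≤ ∑' n, (ENNReal.ofReal ‖F n (c θ)‖) ^ p := my_tsum_rpow_le hp0 hp1 _
      _ = ∑' n, ENNReal.ofReal (v n θ) := by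
            congr 1
            funext n
            rw [ENNReal.ofReal_rpow_of_nonneg (norm_nonneg _) hp0.le, hveq n θ]
    -- measurability of v n
    have hvmeas : ∀ n : ℕ, Measurable fun θ => ENNReal.ofReal (v n θ) := by
      intro n
      apply Measurable.ennreal_ofReal
      apply Measurable.const_mul
      apply Measurable.inv
      apply Continuous.measurable
      apply Continuous.rpow_const
      · fun_prop
      · intro θ; exact Or.inr (by positivity)
    -- per-term integral bound
    have hterm : ∀ n : ℕ, (∫⁻ θ in Set.Ioc (0:ℝ) (2*Real.pi), ENNReal.ofReal (v n θ))
        ≤ ENNReal.ofReal (16*Real.pi * lam n ^ p) := by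
      intro n
      have hconst : ∀ θ : ℝ, ENNReal.ofReal (v n θ) = ENNReal.ofReal (dd n ^ p) *
          ENNReal.ofReal
            ((‖(1:ℂ) - ((T n * r : ℝ) : ℂ) * Complex.exp ((θ:ℂ) * Complex.I)‖ ^ a)⁻¹) := by
        intro θ
        rw [hvdef, ENNReal.ofReal_mul (Real.rpow_nonneg (hdd_pos n).le p)]
      calc (∫⁻ θ in Set.Ioc (0:ℝ) (2*Real.pi), ENNReal.ofReal (v n θ))
          = ENNReal.ofReal (dd n ^ p) * ∫⁻ θ in Set.Ioc (0:ℝ) (2*Real.pi), ENNReal.ofReal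
            ((‖(1:ℂ) - ((T n * r : ℝ) : ℂ) * Complex.exp ((θ:ℂ) * Complex.I)‖ ^ a)⁻¹) := by
            simp_rw [hconst]
            exact lintegral_const_mul' _ _ ENNReal.ofReal_ne_top
      _ ≤ ENNReal.ofReal (dd n ^ p) * ENNReal.ofReal (16*Real.pi * (1 - T n * r)^(1-a)) := by
            gcongr
            exact my_circle_rpow (hsr n).1 (hsr n).2 hNp
      _ ≤ ENNReal.ofReal (16*Real.pi * lam n ^ p) := by
            rw [← ENNReal.ofReal_mul (Real.rpow_nonneg (hdd_pos n).le p)]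
            apply ENNReal.ofReal_le_ofReal
            -- dd n ^ p * (16π (1-Tn r)^{1-a}) ≤ 16π lam n ^ p
            have hx := hx_pos n
            have hy : 0 < 1 - T n * r := by linarith [(hsr n).2]
            have hxy : 1 - T n ≤ 1 - T n * r := by
              have : T n * r ≤ T n * 1 := mul_le_mul_of_nonneg_left hr1.le (hT0 n)
              rw [mul_one] at this; linarith
            have hdd : dd n ^ p = lam n ^ p * (1 - T n) ^ (a - 1) := by
              rw [hdddef]
              simp only []
              rw [Real.mul_rpow (hlam_pos n).le (by positivity),
                ← Real.rpow_mul hx.le]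
              congr 2
              rw [hadef]; field_simp
            have h4 : (1 - T n) ^ (a - 1) ≤ (1 - T n * r) ^ (a - 1) :=
              Real.rpow_le_rpow hx.le hxy (by linarith)
            have h5 : (1 - T n * r) ^ (1 - a) = ((1 - T n * r) ^ (a - 1))⁻¹ := by
              rw [← Real.rpow_neg hy.le]; congr 1; ring
            have h6 : (1 - T n) ^ (a-1) * (1 - T n * r) ^ (1-a) ≤ 1 := by
              rw [h5, ← div_eq_mul_inv, div_le_one (Real.rpow_pos_of_pos hy _)]
              exact h4
            have h7 : 0 ≤ lam n ^ p := Real.rpow_nonneg (hlam_pos n).le p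
            calc dd n ^ p * (16*Real.pi * (1 - T n * r)^(1-a))
                = (16*Real.pi) * (lam n ^ p * ((1 - T n) ^ (a-1) * (1 - T n * r) ^ (1-a))) := by
                  rw [hdd]; ring
            _ ≤ (16*Real.pi) * (lam n ^ p * 1) := by
                  apply mul_le_mul_of_nonneg_left ?_ (by positivity)
                  exact mul_le_mul_of_nonneg_left h6 h7
            _ = 16*Real.pi * lam n ^ p := by ring
    -- assemble
    have hlint : (∫⁻ θ in Set.Ioc (0:ℝ) (2*Real.pi), ENNReal.ofReal (‖f (c θ)‖ ^ p))
        ≤ ENNReal.ofReal (16*Real.pi*L) := by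
      calc (∫⁻ θ in Set.Ioc (0:ℝ) (2*Real.pi), ENNReal.ofReal (‖f (c θ)‖ ^ p))
          ≤ ∫⁻ θ in Set.Ioc (0:ℝ) (2*Real.pi), ∑' n, ENNReal.ofReal (v n θ) :=
            lintegral_mono fun θ => hptw θ
      _ = ∑' n, ∫⁻ θ in Set.Ioc (0:ℝ) (2*Real.pi), ENNReal.ofReal (v n θ) :=
            lintegral_tsum fun n => (hvmeas n).aemeasurable
      _ ≤ ∑' n, ENNReal.ofReal (16*Real.pi * lam n ^ p) := ENNReal.tsum_le_tsum hterm
      _ = ENNReal.ofReal (∑' n, 16*Real.pi * lam n ^ p) := by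
            rw [ENNReal.ofReal_tsum_of_nonneg (fun n => by positivity)
              (hlamp_sum.mul_left _)]
      _ = ENNReal.ofReal (16*Real.pi*L) := by
            rw [hLdef, tsum_mul_left]
    -- from lintegral to the Bochner integral
    have hint_eq : (∫ θ in (0:ℝ)..(2*Real.pi), ‖f (c θ)‖ ^ p)
        = (∫⁻ θ in Set.Ioc (0:ℝ) (2*Real.pi), ENNReal.ofReal (‖f (c θ)‖ ^ p)).toReal := by
      rw [intervalIntegral.integral_of_le (by positivity)]
      rw [integral_eq_lintegral_of_nonneg_ae]
      · exact Eventually.of_forall fun θ => by positivity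
      · exact hgcont.aestronglyMeasurable
    have hint_le : (∫ θ in (0:ℝ)..(2*Real.pi), ‖f (c θ)‖ ^ p) ≤ 16*Real.pi*L := by
      rw [hint_eq]
      calc _ ≤ (ENNReal.ofReal (16*Real.pi*L)).toReal :=
            ENNReal.toReal_mono ENNReal.ofReal_ne_top hlint
      _ = 16*Real.pi*L := ENNReal.toReal_ofReal (by positivity)
    show (1 / (2 * Real.pi)) * (∫ θ in (0:ℝ)..(2*Real.pi),
        ‖f ((r : ℂ) * Complex.exp ((θ : ℂ) * Complex.I))‖ ^ p) ≤ _
    apply mul_le_mul_of_nonneg_left ?_ (by positivity)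
    exact hint_le
  -- hpInt is nonnegative
  have hpInt_nonneg : ∀ r : ℝ, 0 ≤ hpInt p f r := by
    intro r
    apply mul_nonneg (by positivity)
    apply intervalIntegral.integral_nonneg (by positivity)
    intro θ _
    positivity
  -- f is in H^p
  have hmem : MemHp p f := by
    refine ⟨hdiff, ⟨((1/(2*Real.pi)) * (16*Real.pi*L)) ^ (1/p), ?_⟩⟩
    rintro x ⟨r, rfl⟩
    exact Real.rpow_le_rpow (hpInt_nonneg _) (key r r.2.1 r.2.2) (by positivity)
  -- apply the hypothesis at z = 0
  have hInt0 := h f hmem 0 (Metric.mem_ball_self one_pos)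
  have hInt : IntegrableOn (fun t : ℝ => f (t:ℂ)) (Set.Ico (0:ℝ) 1) μ := by
    have heq : (fun t : ℝ => f (t:ℂ) / (1 - (t:ℂ) * 0)) = fun t : ℝ => f (t:ℂ) := by
      funext t; simp
    rwa [heq] at hInt0
  have hIntN : IntegrableOn (fun t : ℝ => ‖f (t:ℂ)‖) (Set.Ico (0:ℝ) 1) μ := hInt.norm
  set M : ℝ := ∫ t in Set.Ico (0:ℝ) 1, ‖f (t:ℂ)‖ ∂μ with hMdef
  -- the key lower bound
  have hbound : ∀ n : ℕ, ((n:ℝ)+1) ≤ M := by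
    intro n
    set x := 1 - T n with hxdef
    have hx : 0 < x := hx_pos n
    set cl : ℝ := dd n * ((2*x) ^ N)⁻¹ with hcldef
    have hcl : 0 < cl := mul_pos (hdd_pos n) (inv_pos.mpr (pow_pos (by linarith) N))
    have hsub : Set.Ico (T n) 1 ⊆ Set.Ico (0:ℝ) 1 := fun t ht => ⟨le_trans (hT0 n) ht.1, ht.2⟩
    -- pointwise lower bound on [T n, 1)
    have step0 : ∀ t ∈ Set.Ico (T n) 1, cl ≤ ‖f (t:ℂ)‖ := by
      intro t ht
      have ht0 : 0 ≤ t := le_trans (hT0 n) ht.1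
      have ht1 : t < 1 := ht.2
      set gt : ℕ → ℝ := fun m => dd m * (((1 - T m * t) ^ N))⁻¹ with hgtdef
      have hpos_den : ∀ m : ℕ, 0 < 1 - T m * t := by
        intro m
        have h1 : T m * t ≤ t := by
          calc T m * t ≤ 1 * t := mul_le_mul_of_nonneg_right (hTlt m).le ht0
          _ = t := one_mul t
        linarith
      have hgt_nonneg : ∀ m, 0 ≤ gt m := fun m =>
        mul_nonneg (hdd_pos m).le (inv_nonneg.mpr (pow_nonneg (hpos_den m).le N))
      have hgt_sum : Summable gt := by
        refine Summable.of_nonneg_of_le hgt_nonneg (fun m => ?_)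
          (hlam_sum.mul_right ((1-t)^N)⁻¹)
        rw [hgtdef]
        have h1 : T m * t ≤ t := by
          calc T m * t ≤ 1 * t := mul_le_mul_of_nonneg_right (hTlt m).le ht0
          _ = t := one_mul t
        have h2 : 1 - t ≤ 1 - T m * t := by linarith
        have h3 : (1-t)^N ≤ (1 - T m * t)^N := pow_le_pow_left₀ (by linarith) h2 N
        have h4 : ((1 - T m * t)^N)⁻¹ ≤ ((1-t)^N)⁻¹ :=
          inv_anti₀ (pow_pos (by linarith) N) h3
        exact mul_le_mul (hdd_le m) h4
          (inv_nonneg.mpr (pow_nonneg (hpos_den m).le N)) (hlam_pos m).le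
      have hFcast : ∀ m : ℕ, F m (t:ℂ) = ((gt m : ℝ) : ℂ) := by
        intro m
        rw [hFdef, hgtdef]
        push_cast
        ring
      have hfeq : f (t:ℂ) = ((∑' m, gt m : ℝ) : ℂ) := by
        rw [hfdef]
        simp only [hFcast]
        rw [Complex.ofReal_tsum]
      have hnorm : ‖f (t:ℂ)‖ = ∑' m, gt m := by
        rw [hfeq, Complex.norm_real, Real.norm_eq_abs,
          abs_of_nonneg (tsum_nonneg hgt_nonneg)]
      rw [hnorm]
      have hle : cl ≤ gt n := by
        rw [hcldef, hgtdef]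
        have h1 : T n * T n ≤ T n * t := mul_le_mul_of_nonneg_left ht.1 (hT0 n)
        have h2 : 1 - T n * t ≤ 2 * x := by rw [hxdef]; nlinarith [hT0 n, hTlt n]
        have h3 : (1 - T n * t)^N ≤ (2*x)^N :=
          pow_le_pow_left₀ (hpos_den n).le h2 N
        have h4 : ((2*x)^N)⁻¹ ≤ ((1 - T n * t)^N)⁻¹ :=
          inv_anti₀ (pow_pos (hpos_den n) N) h3
        exact mul_le_mul_of_nonneg_left h4 (hdd_pos n).le
      calc cl ≤ gt n := hle
      _ ≤ ∑' m, gt m := hgt_sum.le_tsum n fun m _ => hgt_nonneg m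
    -- integrate
    have step1 : cl * (μ (Set.Ico (T n) 1)).toReal ≤ ∫ t in Set.Ico (T n) 1, ‖f (t:ℂ)‖ ∂μ := by
      have := setIntegral_mono_on (integrableOn_const (measure_lt_top μ _).ne)
        (hIntN.mono_set hsub) measurableSet_Ico step0
      calc cl * (μ (Set.Ico (T n) 1)).toReal
          = ∫ _ in Set.Ico (T n) 1, cl ∂μ := by rw [setIntegral_const, smul_eq_mul, measureReal_def]; ring
      _ ≤ _ := this
    have step2 : (∫ t in Set.Ico (T n) 1, ‖f (t:ℂ)‖ ∂μ) ≤ M := by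
      rw [hMdef]
      apply setIntegral_mono_set hIntN
        (Eventually.of_forall fun t => norm_nonneg _)
        (HasSubset.Subset.eventuallyLE hsub)
    have step4 : (2:ℝ)^N * ((n:ℝ)+1)^((4:ℝ)/p) * x^(1/p) ≤ (μ (Set.Ico (T n) 1)).toReal :=
      (hT2 n).le
    have step5 : cl * ((2:ℝ)^N * ((n:ℝ)+1)^((4:ℝ)/p) * x^(1/p)) ≤ M := by
      calc cl * ((2:ℝ)^N * ((n:ℝ)+1)^((4:ℝ)/p) * x^(1/p))
          ≤ cl * (μ (Set.Ico (T n) 1)).toReal := mul_le_mul_of_nonneg_left step4 hcl.le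
      _ ≤ _ := le_trans step1 step2
    -- compute the left side
    have hcleq : cl * ((2:ℝ)^N * ((n:ℝ)+1)^((4:ℝ)/p) * x^(1/p)) = ((n:ℝ)+1)^((2:ℝ)/p) := by
      have hA : (0:ℝ) < (n:ℝ)+1 := by positivity
      have hP : (0:ℝ) < (2:ℝ)^N := by positivity
      have e2 : ((n:ℝ)+1) ^ (-(2/p)) * ((n:ℝ)+1) ^ ((4:ℝ)/p) = ((n:ℝ)+1) ^ ((2:ℝ)/p) := by
        rw [← Real.rpow_add hA]; congr 1; ring
      have e4 : x ^ ((N:ℝ) - 1/p) * x ^ ((1:ℝ)/p) * (x ^ ((N:ℝ)))⁻¹ = 1 := by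
        rw [← Real.rpow_add hx, ← Real.rpow_neg hx.le, ← Real.rpow_add hx]
        rw [show ((N:ℝ) - 1/p + 1/p + -(N:ℝ)) = 0 by ring, Real.rpow_zero]
      rw [hcldef, hdddef, hlamdef]
      simp only []
      rw [mul_pow, ← Real.rpow_natCast x N]
      calc ((n:ℝ)+1) ^ (-(2/p)) * x ^ ((N:ℝ) - 1/p) * ((2:ℝ)^N * x ^ ((N:ℝ)))⁻¹ *
            ((2:ℝ)^N * ((n:ℝ)+1)^((4:ℝ)/p) * x^(1/p))
          = (((n:ℝ)+1) ^ (-(2/p)) * ((n:ℝ)+1)^((4:ℝ)/p)) *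
            (x ^ ((N:ℝ) - 1/p) * x ^ ((1:ℝ)/p) * (x ^ ((N:ℝ)))⁻¹) *
            (((2:ℝ)^N)⁻¹ * (2:ℝ)^N) := by
            rw [mul_inv]; ring
      _ = ((n:ℝ)+1) ^ ((2:ℝ)/p) * 1 * 1 := by
            rw [e2, e4, inv_mul_cancel₀ hP.ne']
      _ = ((n:ℝ)+1)^((2:ℝ)/p) := by ring
    have hfinal : ((n:ℝ)+1) ≤ ((n:ℝ)+1)^((2:ℝ)/p) := by
      calc ((n:ℝ)+1) = ((n:ℝ)+1)^(1:ℝ) := (Real.rpow_one _).symm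
      _ ≤ _ := Real.rpow_le_rpow_of_exponent_le (hA1 n) (by linarith)
    rw [hcleq] at step5
    linarith
  obtain ⟨k, hk⟩ := exists_nat_gt M
  have := hbound k
  have hcast : (k:ℝ) ≤ (k:ℝ) + 1 := by linarith
  linarith
end

section
/- Suppose 0<p<∞ and let μ be a finite positive Borel measure on [0,1) which is a 1-logarithmic (1/p)-Carleson measure. For 0≤b<1 define f_b : [0,1) → ℝ by f_b(t) = ( (1−b²)/(1−bt)² )^{1/p}. Then lim_{b→1⁻} ∫_{[0,1)} f_b(t) dμ(t) = 0. -/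
open MeasureTheory Filter Topology

private lemma aux_pow_nat (s : ℝ) (j : ℕ) : (((2:ℝ)^j : ℝ)) ^ s = ((2:ℝ)^s)^j := by
  rw [← Real.rpow_natCast (2:ℝ) j, ← Real.rpow_natCast ((2:ℝ)^s) j,
    ← Real.rpow_mul (by norm_num : (0:ℝ) ≤ 2), ← Real.rpow_mul (by norm_num : (0:ℝ) ≤ 2),
    mul_comm]

private lemma aux_cover {a t : ℝ} (ha : 0 < a) (ht : t < 1 - a) :
    ∃ j : ℕ, 1 - a*2^(j+1) < t ∧ t ≤ 1 - a*2^j := by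
  have hx1 : 1 < (1-t)/a := (one_lt_div ha).2 (by linarith)
  have hxpos : 0 < (1-t)/a := by linarith
  have hlogb : 0 ≤ Real.logb 2 ((1-t)/a) := Real.logb_nonneg (by norm_num) hx1.le
  set x := (1-t)/a with hxdef
  refine ⟨⌊Real.logb 2 x⌋₊, ?_, ?_⟩
  · have h1 : Real.logb 2 x < (⌊Real.logb 2 x⌋₊ : ℝ) + 1 := Nat.lt_floor_add_one _
    have h2 : x < (2:ℝ) ^ (⌊Real.logb 2 x⌋₊ + 1 : ℕ) := by
      calc x = (2:ℝ) ^ Real.logb 2 x := (Real.rpow_logb (by norm_num) (by norm_num) hxpos).symm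
        _ < (2:ℝ) ^ ((⌊Real.logb 2 x⌋₊ : ℝ) + 1) :=
            (Real.rpow_lt_rpow_left_iff (by norm_num)).2 h1
        _ = (2:ℝ) ^ (⌊Real.logb 2 x⌋₊ + 1 : ℕ) := by
            rw [← Real.rpow_natCast (2:ℝ) (⌊Real.logb 2 x⌋₊ + 1)]; norm_num
    rw [hxdef, div_lt_iff₀ ha] at h2
    nlinarith
  · have h1 : (⌊Real.logb 2 x⌋₊ : ℝ) ≤ Real.logb 2 x := Nat.floor_le hlogb
    have h2 : (2:ℝ) ^ (⌊Real.logb 2 x⌋₊ : ℕ) ≤ x := by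
      calc (2:ℝ) ^ (⌊Real.logb 2 x⌋₊ : ℕ) = (2:ℝ) ^ ((⌊Real.logb 2 x⌋₊ : ℕ) : ℝ) :=
            (Real.rpow_natCast _ _).symm
        _ ≤ (2:ℝ) ^ Real.logb 2 x := (Real.rpow_le_rpow_left_iff (by norm_num)).2 h1
        _ = x := Real.rpow_logb (by norm_num) (by norm_num) hxpos
    rw [hxdef, le_div_iff₀ ha] at h2
    nlinarith

private lemma base_bound {b t x : ℝ} (hb2 : 1/2 ≤ b) (hb1 : b < 1)
    (hx : 0 < x) (hxt : x ≤ 1 - t) :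
    (1 - b^2) / (1 - b*t)^2 ≤ 8*(1-b) / x^2 := by
  have ht1 : t < 1 := by linarith
  have h2 : x/2 ≤ 1 - b*t := by nlinarith
  have h3 : x^2/4 ≤ (1-b*t)^2 := by nlinarith
  have h4 : 1 - b^2 ≤ 2*(1-b) := by nlinarith
  rw [div_le_div_iff₀ (by nlinarith) (by positivity)]
  nlinarith [mul_le_mul_of_nonneg_right h4 (sq_nonneg x),
    mul_le_mul_of_nonneg_left h3 (by linarith : (0:ℝ) ≤ 2*(1-b))]

private lemma base_bound0 {b t : ℝ} (hb2 : 1/2 ≤ b) (hb1 : b < 1) (ht0 : 0 ≤ t) (ht1 : t < 1) :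
    (1 - b^2) / (1 - b*t)^2 ≤ 2 / (1-b) := by
  have h2 : 1 - b ≤ 1 - b*t := by nlinarith
  have h4 : (1-b)^2 ≤ (1-b*t)^2 := by nlinarith
  rw [div_le_div_iff₀ (by nlinarith) (by linarith)]
  nlinarith [mul_le_mul_of_nonneg_left h4 (by linarith : (0:ℝ) ≤ 1+b), sq_nonneg (1-b*t)]

set_option maxHeartbeats 2000000 in
private lemma key_bound (p C : ℝ) (hp : 0 < p) (hC : 0 < C) (μ : Measure ℝ) [IsFiniteMeasure μ]
    (hcarC : ∀ t ∈ Set.Ico (0:ℝ) 1,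
      (μ (Set.Ico t 1)).toReal * Real.log (2 / (1 - t)) ≤ C * (1 - t) ^ (1/p))
    {b : ℝ} (hb2 : 1/2 < b) (hb1 : b < 1) :
    ∫ t in Set.Ico (0:ℝ) 1, ((1 - b^2) / (1 - b*t)^2) ^ (1/p) ∂μ ≤
      ((2:ℝ)^(1/p)*C + 2*((16:ℝ)^(1/p)*C) * (1 - ((2:ℝ)^(1/p))⁻¹)⁻¹) / Real.log (1/(1-b)) +
      ((16:ℝ)^(1/p)*C * (2:ℝ)^((1/p)/2) / Real.log 2 * (1 - ((2:ℝ)^((1/p)/2))⁻¹)⁻¹)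
        * (1-b)^((1/p)/4) := by
  set s := 1/p with hsdef
  have hs : 0 < s := by positivity
  set a := 1 - b with hadef
  have ha : 0 < a := by rw [hadef]; linarith
  have ha2 : a < 1/2 := by rw [hadef]; linarith
  set q := ((2:ℝ)^s)⁻¹ with hqdef
  set q' := ((2:ℝ)^(s/2))⁻¹ with hq'def
  have h2s : 1 < (2:ℝ)^s := (Real.one_lt_rpow_iff_of_pos (by norm_num)).2 (Or.inl ⟨by norm_num, hs⟩)
  have h2s' : 1 < (2:ℝ)^(s/2) := (Real.one_lt_rpow_iff_of_pos (by norm_num)).2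
    (Or.inl ⟨by norm_num, by positivity⟩)
  have hq0 : 0 < q := by rw [hqdef]; positivity
  have hq1 : q < 1 := by rw [hqdef]; exact inv_lt_one_of_one_lt₀ h2s
  have hq'0 : 0 < q' := by rw [hq'def]; positivity
  have hq'1 : q' < 1 := by rw [hq'def]; exact inv_lt_one_of_one_lt₀ h2s'
  have hlog2 : 0 < Real.log 2 := Real.log_pos (by norm_num)
  have hX : 0 < Real.log (1/a) := Real.log_pos ((one_lt_div ha).2 (by linarith))
  set K1 := 2*((16:ℝ)^s*C) with hK1def
  set K2 := (16:ℝ)^s*C * (2:ℝ)^(s/2) / Real.log 2 with hK2def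
  set S1 := (1 - q)⁻¹ with hS1def
  set S2 := (1 - q')⁻¹ with hS2def
  have hK1 : 0 < K1 := by rw [hK1def]; positivity
  have hK2 : 0 < K2 := by rw [hK2def]; positivity
  have hS1 : 0 < S1 := by rw [hS1def]; exact inv_pos.2 (by linarith)
  have hS2 : 0 < S2 := by rw [hS2def]; exact inv_pos.2 (by linarith)
  have hB0 : 0 ≤ ((2:ℝ)^s*C + K1*S1) / Real.log (1/a) + K2*S2 * a^(s/4) := by
    have h1 : (0:ℝ) < (2:ℝ)^s*C := by positivity
    have := Real.rpow_nonneg ha.le (s/4)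
    positivity
  -- the integrand as an ENNReal-valued function
  set F : ℝ → ENNReal := fun t => ENNReal.ofReal (((1 - b^2) / (1 - b*t)^2) ^ s) with hFdef
  have hnum : 0 ≤ 1 - b^2 := by nlinarith
  have hfnn : ∀ t : ℝ, 0 ≤ ((1 - b^2) / (1 - b*t)^2) ^ s :=
    fun t => Real.rpow_nonneg (div_nonneg hnum (sq_nonneg _)) _
  have hmeas : Measurable fun t : ℝ => ((1 - b^2) / (1 - b*t)^2) ^ s := by
    have h1 : Measurable fun t : ℝ => (1 - b^2) / (1 - b*t)^2 :=
      measurable_const.div ((measurable_const.sub (measurable_id.const_mul b)).pow_const 2)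
    fun_prop
  have step0 : ∫ t in Set.Ico (0:ℝ) 1, ((1 - b^2) / (1 - b*t)^2) ^ s ∂μ
      = (∫⁻ t in Set.Ico (0:ℝ) 1, F t ∂μ).toReal := by
    rw [integral_eq_lintegral_of_nonneg_ae (ae_of_all _ hfnn) hmeas.aestronglyMeasurable]
  rw [step0]
  refine ENNReal.toReal_le_of_le_ofReal hB0 ?_
  -- covering
  set T : Set ℝ := Set.Ico (1-a) 1 with hTdef
  set S : ℕ → Set ℝ := fun j => Set.Ico (0:ℝ) 1 ∩ Set.Ioc (1 - a*2^(j+1)) (1 - a*2^j) with hSdef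
  have hcov : Set.Ico (0:ℝ) 1 ⊆ T ∪ ⋃ j, S j := by
    intro t ht
    rcases le_or_gt (1-a) t with h | h
    · exact Or.inl ⟨h, ht.2⟩
    · obtain ⟨j, hj1, hj2⟩ := aux_cover ha h
      exact Or.inr (Set.mem_iUnion.2 ⟨j, ht, hj1, hj2⟩)
  have hsplit : ∫⁻ t in Set.Ico (0:ℝ) 1, F t ∂μ ≤
      (∫⁻ t in T, F t ∂μ) + ∑' j, ∫⁻ t in S j, F t ∂μ :=
    calc ∫⁻ t in Set.Ico (0:ℝ) 1, F t ∂μ ≤ ∫⁻ t in T ∪ ⋃ j, S j, F t ∂μ :=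
          lintegral_mono_set hcov
      _ ≤ (∫⁻ t in T, F t ∂μ) + ∫⁻ t in ⋃ j, S j, F t ∂μ := lintegral_union_le _ _ _
      _ ≤ _ := add_le_add le_rfl (lintegral_iUnion_le _ _)
  -- bound on T
  have hT : ∫⁻ t in T, F t ∂μ ≤ ENNReal.ofReal ((2:ℝ)^s*C/Real.log (1/a)) := by
    have hL2 : 0 < Real.log (2/a) := Real.log_pos (by rw [lt_div_iff₀ ha]; linarith)
    have hμT : μ T ≤ ENNReal.ofReal (C*a^s/Real.log (2/a)) := by
      have h1a : (1-a) ∈ Set.Ico (0:ℝ) 1 := ⟨by linarith, by linarith⟩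
      have hc := hcarC (1-a) h1a
      rw [show (1:ℝ)-(1-a) = a by ring] at hc
      have h2 : (μ T).toReal ≤ C*a^s/Real.log (2/a) := by
        rw [le_div_iff₀ hL2]; exact hc
      calc μ T = ENNReal.ofReal ((μ T).toReal) := (ENNReal.ofReal_toReal (measure_ne_top μ T)).symm
        _ ≤ _ := ENNReal.ofReal_le_ofReal h2
    calc ∫⁻ t in T, F t ∂μ ≤ ∫⁻ _ in T, ENNReal.ofReal ((2/a)^s) ∂μ := by
          refine setLIntegral_mono' measurableSet_Ico (fun t htT => ?_)
          refine ENNReal.ofReal_le_ofReal ?_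
          refine Real.rpow_le_rpow (div_nonneg hnum (sq_nonneg _)) ?_ hs.le
          exact base_bound0 hb2.le hb1 (by linarith [htT.1]) htT.2
      _ = ENNReal.ofReal ((2/a)^s) * μ T := setLIntegral_const _ _
      _ ≤ ENNReal.ofReal ((2/a)^s) * ENNReal.ofReal (C*a^s/Real.log (2/a)) :=
          mul_le_mul_of_nonneg_left hμT (by positivity)
      _ = ENNReal.ofReal ((2/a)^s * (C*a^s/Real.log (2/a))) :=
          (ENNReal.ofReal_mul (Real.rpow_nonneg (by positivity) _)).symm
      _ ≤ ENNReal.ofReal ((2:ℝ)^s*C/Real.log (1/a)) := by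
          refine ENNReal.ofReal_le_ofReal ?_
          have e1 : (2/a)^s * a^s = (2:ℝ)^s := by
            rw [← Real.mul_rpow (by positivity) ha.le, div_mul_cancel₀]
            exact ha.ne'
          have e2 : (2/a)^s * (C*a^s/Real.log (2/a)) = (2:ℝ)^s*C/Real.log (2/a) := by
            rw [show (2/a)^s * (C*a^s/Real.log (2/a)) =
              ((2/a)^s * a^s) * C / Real.log (2/a) from by ring, e1]
          rw [e2]
          have hlog12 : Real.log (1/a) ≤ Real.log (2/a) :=
            Real.log_le_log (by positivity) (by gcongr; norm_num)
          gcongr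
  -- bound on each S j
  have hSj : ∀ j : ℕ, ∫⁻ t in S j, F t ∂μ ≤
      ENNReal.ofReal (K1*q^j/Real.log (1/a) + K2*a^(s/4)*q'^j) := by
    intro j
    have hxj : 0 < a*(2:ℝ)^j := by positivity
    have hxj1 : 0 < a*(2:ℝ)^(j+1) := by positivity
    set Mj := (8*a/(a*(2:ℝ)^j)^2)^s with hMjdef
    have hMj0 : 0 ≤ Mj := Real.rpow_nonneg (by positivity) _
    set u := max (1-a*(2:ℝ)^(j+1)) 0 with hudef
    set m := min (a*(2:ℝ)^(j+1)) 1 with hmdef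
    have hm0 : 0 < m := lt_min hxj1 one_pos
    have hm1 : m ≤ 1 := min_le_right _ _
    have hmle : m ≤ a*2^(j+1) := min_le_left _ _
    have hu01 : u ∈ Set.Ico (0:ℝ) 1 := ⟨le_max_right _ _, max_lt (by nlinarith) one_pos⟩
    have hum : 1 - u = m := by
      rcases le_total (1-a*(2:ℝ)^(j+1)) 0 with h | h
      · rw [hudef, hmdef, max_eq_right h, min_eq_right (by linarith)]; ring
      · rw [hudef, hmdef, max_eq_left h, min_eq_left (by linarith)]; ring
    have hLm : Real.log 2 ≤ Real.log (2/m) :=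
      Real.log_le_log (by norm_num) ((le_div_iff₀ hm0).2 (by nlinarith))
    have hLmpos : 0 < Real.log (2/m) := lt_of_lt_of_le hlog2 hLm
    have hμu : μ (Set.Ico u 1) ≤ ENNReal.ofReal (C*m^s/Real.log (2/m)) := by
      have hc := hcarC u hu01
      rw [hum] at hc
      have h2 : (μ (Set.Ico u 1)).toReal ≤ C*m^s/Real.log (2/m) := by
        rw [le_div_iff₀ hLmpos]; exact hc
      calc μ (Set.Ico u 1) = ENNReal.ofReal ((μ (Set.Ico u 1)).toReal) :=
            (ENNReal.ofReal_toReal (measure_ne_top μ _)).symm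
        _ ≤ _ := ENNReal.ofReal_le_ofReal h2
    have hsub : S j ⊆ Set.Ico u 1 := by
      rintro t ⟨ht01, htj⟩
      exact ⟨max_le htj.1.le ht01.1, ht01.2⟩
    -- the main real-number estimate
    have hreal : Mj * (C*m^s/Real.log (2/m)) ≤ K1*q^j/Real.log (1/a) + K2*a^(s/4)*q'^j := by
      have claim1 : Mj * m^s ≤ (16:ℝ)^s * q^j := by
        have hb8 : (0:ℝ) ≤ 8*a/(a*(2:ℝ)^j)^2 := by positivity
        have e : Mj * m^s = ((8*a/(a*(2:ℝ)^j)^2) * m)^s :=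
          (Real.mul_rpow hb8 hm0.le).symm
        have hbase : (8*a/(a*(2:ℝ)^j)^2) * m ≤ 16/(2:ℝ)^j := by
          have e3 : (8*a/(a*(2:ℝ)^j)^2) * (a*(2:ℝ)^(j+1)) = 16/(2:ℝ)^j := by
            field_simp
            ring
          calc (8*a/(a*(2:ℝ)^j)^2) * m ≤ (8*a/(a*(2:ℝ)^j)^2) * (a*(2:ℝ)^(j+1)) := by
                exact mul_le_mul_of_nonneg_left hmle hb8
            _ = 16/(2:ℝ)^j := e3
        have e2 : ((16:ℝ)/(2:ℝ)^j)^s = (16:ℝ)^s * q^j := by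
          rw [Real.div_rpow (by norm_num) (by positivity), aux_pow_nat s j, hqdef,
            inv_pow, div_eq_mul_inv]
        calc Mj * m^s = ((8*a/(a*(2:ℝ)^j)^2) * m)^s := e
          _ ≤ ((16:ℝ)/(2:ℝ)^j)^s := Real.rpow_le_rpow (by positivity) hbase hs.le
          _ = (16:ℝ)^s * q^j := e2
      have claim2 : Mj * (C*m^s/Real.log (2/m)) ≤ (16:ℝ)^s*C*q^j/Real.log (2/m) := by
        rw [show Mj * (C*m^s/Real.log (2/m)) = (Mj * m^s) * C / Real.log (2/m) from by ring,
          show (16:ℝ)^s*C*q^j/Real.log (2/m) = ((16:ℝ)^s*q^j) * C / Real.log (2/m) from by ring]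
        exact div_le_div_of_nonneg_right (mul_le_mul_of_nonneg_right claim1 hC.le) hLmpos.le
      refine claim2.trans ?_
      rcases le_or_gt (a*(2:ℝ)^(j+1)) (a^((1:ℝ)/2)) with hcase | hcase
      · -- close to 1: use the log gain
        have hsq1 : a^((1:ℝ)/2) ≤ 1 := Real.rpow_le_one ha.le (by linarith) (by norm_num)
        have hsqpos : 0 < a^((1:ℝ)/2) := Real.rpow_pos_of_pos ha _
        have hma : m = a*(2:ℝ)^(j+1) := min_eq_left (hcase.trans hsq1)
        have h1 : (1:ℝ)/a^((1:ℝ)/2) ≤ 2/m := by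
          rw [hma, div_le_div_iff₀ hsqpos hxj1]
          nlinarith
        have h3 : (1/2)*Real.log (1/a) ≤ Real.log (2/m) := by
          have e4 : ((1:ℝ)/a)^((1:ℝ)/2) = 1/a^((1:ℝ)/2) := by
            rw [Real.div_rpow (by norm_num) ha.le, Real.one_rpow]
          calc (1/2)*Real.log (1/a) = Real.log ((1/a)^((1:ℝ)/2)) :=
                (Real.log_rpow (by positivity) _).symm
            _ = Real.log (1/a^((1:ℝ)/2)) := by rw [e4]
            _ ≤ Real.log (2/m) := Real.log_le_log (by positivity) h1
        have h5 : (16:ℝ)^s*C*q^j/Real.log (2/m) ≤ (16:ℝ)^s*C*q^j/((1/2)*Real.log (1/a)) := by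
          gcongr
        have h6 : (16:ℝ)^s*C*q^j/((1/2)*Real.log (1/a)) = K1*q^j/Real.log (1/a) := by
          rw [hK1def]
          field_simp
        refine (h5.trans_eq h6).trans ?_
        have : 0 ≤ K2*a^(s/4)*q'^j := by positivity
        linarith
      · -- far from 1: geometric decay beats everything
        have haa : a^((1:ℝ)/2)*a^((1:ℝ)/2) = a := by
          rw [← Real.rpow_add ha]; norm_num
        have hsqpos : 0 < a^((1:ℝ)/2) := Real.rpow_pos_of_pos ha _
        have h1 : (1:ℝ)/a^((1:ℝ)/2) < (2:ℝ)^(j+1) := by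
          rw [div_lt_iff₀ hsqpos]
          nlinarith
        have h2 : q'^(j+1) ≤ a^(s/4) := by
          have hstep : ((1:ℝ)/a^((1:ℝ)/2))^(s/2) ≤ (((2:ℝ)^(j+1) : ℝ))^(s/2) :=
            Real.rpow_le_rpow (by positivity) h1.le (by positivity)
          rw [aux_pow_nat (s/2) (j+1)] at hstep
          have hL : ((1:ℝ)/a^((1:ℝ)/2))^(s/2) = (a^(s/4))⁻¹ := by
            rw [Real.div_rpow (by norm_num) hsqpos.le, Real.one_rpow,
              ← Real.rpow_mul ha.le]
            congr 1
            ring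
          rw [hL] at hstep
          calc q'^(j+1) = (((2:ℝ)^(s/2))^(j+1))⁻¹ := by rw [hq'def, inv_pow]
            _ ≤ a^(s/4) := by
                rw [inv_le_comm₀ (by positivity) (by positivity)]
                exact hstep
        have h4 : q'^j ≤ (2:ℝ)^(s/2)*a^(s/4) := by
          have hq'c : (2:ℝ)^(s/2)*q' = 1 := by
            rw [hq'def]; exact mul_inv_cancel₀ (by positivity)
          have e5 : q'^j = (2:ℝ)^(s/2)*q'^(j+1) := by
            calc q'^j = q'^j * ((2:ℝ)^(s/2) * q') := by rw [hq'c, mul_one]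
              _ = (2:ℝ)^(s/2)*q'^(j+1) := by rw [pow_succ]; ring
          rw [e5]
          exact mul_le_mul_of_nonneg_left h2 (by positivity)
        have h3 : q^j ≤ ((2:ℝ)^(s/2)*a^(s/4))*q'^j := by
          have hqq' : q = q'*q' := by
            rw [hqdef, hq'def, ← mul_inv, ← Real.rpow_add (by norm_num : (0:ℝ) < 2)]
            norm_num
          calc q^j = q'^j*q'^j := by rw [hqq', mul_pow]
            _ ≤ ((2:ℝ)^(s/2)*a^(s/4))*q'^j :=
                mul_le_mul_of_nonneg_right h4 (pow_nonneg hq'0.le j)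
        have h5 : (16:ℝ)^s*C*q^j/Real.log (2/m) ≤ (16:ℝ)^s*C*q^j/Real.log 2 := by
          gcongr
        have h6 : (16:ℝ)^s*C*q^j/Real.log 2 ≤ K2*a^(s/4)*q'^j := by
          rw [hK2def]
          rw [div_le_iff₀ hlog2] at *
          calc (16:ℝ)^s*C*q^j ≤ (16:ℝ)^s*C*(((2:ℝ)^(s/2)*a^(s/4))*q'^j) := by
                exact mul_le_mul_of_nonneg_left h3 (by positivity)
            _ = (16:ℝ)^s*C*(2:ℝ)^(s/2)/Real.log 2*a^(s/4)*q'^j * Real.log 2 := by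
                field_simp
        refine (h5.trans h6).trans ?_
        have : 0 ≤ K1*q^j/Real.log (1/a) := by positivity
        linarith
    calc ∫⁻ t in S j, F t ∂μ ≤ ∫⁻ _ in S j, ENNReal.ofReal Mj ∂μ := by
          refine setLIntegral_mono' (measurableSet_Ico.inter measurableSet_Ioc) ?_
          rintro t ⟨ht01, htj⟩
          refine ENNReal.ofReal_le_ofReal ?_
          refine Real.rpow_le_rpow (div_nonneg hnum (sq_nonneg _)) ?_ hs.le
          exact base_bound hb2.le hb1 hxj (by linarith [htj.2])
      _ = ENNReal.ofReal Mj * μ (S j) := setLIntegral_const _ _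
      _ ≤ ENNReal.ofReal Mj * μ (Set.Ico u 1) := mul_le_mul_of_nonneg_left (measure_mono hsub) (by positivity)
      _ ≤ ENNReal.ofReal Mj * ENNReal.ofReal (C*m^s/Real.log (2/m)) :=
          mul_le_mul_of_nonneg_left hμu (by positivity)
      _ = ENNReal.ofReal (Mj * (C*m^s/Real.log (2/m))) := (ENNReal.ofReal_mul hMj0).symm
      _ ≤ _ := ENNReal.ofReal_le_ofReal hreal
  -- summing the geometric series
  have hgeom : ∀ r : ℝ, 0 ≤ r → r < 1 →
      (1 - ENNReal.ofReal r)⁻¹ = ENNReal.ofReal ((1-r)⁻¹) := by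
    intro r h0 h1
    rw [ENNReal.ofReal_inv_of_pos (by linarith), ENNReal.ofReal_sub 1 h0, ENNReal.ofReal_one]
  have hsum : ∑' j : ℕ, ∫⁻ t in S j, F t ∂μ ≤
      ENNReal.ofReal (K1*S1/Real.log (1/a) + K2*S2*a^(s/4)) := by
    have e1 : ∀ j : ℕ, ENNReal.ofReal (K1*q^j/Real.log (1/a) + K2*a^(s/4)*q'^j)
        = ENNReal.ofReal (K1/Real.log (1/a)) * (ENNReal.ofReal q)^j
          + ENNReal.ofReal (K2*a^(s/4)) * (ENNReal.ofReal q')^j := by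
      intro j
      rw [ENNReal.ofReal_add (by positivity) (by positivity),
        show K1*q^j/Real.log (1/a) = (K1/Real.log (1/a))*q^j from by ring,
        ENNReal.ofReal_mul (by positivity), ENNReal.ofReal_mul (by positivity),
        ENNReal.ofReal_pow hq0.le, ENNReal.ofReal_pow hq'0.le]
    calc ∑' j : ℕ, ∫⁻ t in S j, F t ∂μ
        ≤ ∑' j : ℕ, ENNReal.ofReal (K1*q^j/Real.log (1/a) + K2*a^(s/4)*q'^j) :=
          ENNReal.tsum_le_tsum hSj
      _ = ENNReal.ofReal (K1/Real.log (1/a)) * ∑' j : ℕ, (ENNReal.ofReal q)^j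
          + ENNReal.ofReal (K2*a^(s/4)) * ∑' j : ℕ, (ENNReal.ofReal q')^j := by
          simp only [e1]
          rw [ENNReal.tsum_add, ENNReal.tsum_mul_left, ENNReal.tsum_mul_left]
      _ = ENNReal.ofReal (K1/Real.log (1/a)) * ENNReal.ofReal S1
          + ENNReal.ofReal (K2*a^(s/4)) * ENNReal.ofReal S2 := by
          rw [ENNReal.tsum_geometric, ENNReal.tsum_geometric, hgeom q hq0.le hq1,
            hgeom q' hq'0.le hq'1, hS1def, hS2def]
      _ = ENNReal.ofReal ((K1/Real.log (1/a))*S1 + (K2*a^(s/4))*S2) := by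
          rw [← ENNReal.ofReal_mul (by positivity), ← ENNReal.ofReal_mul (by positivity),
            ← ENNReal.ofReal_add (by positivity) (by positivity)]
      _ ≤ ENNReal.ofReal (K1*S1/Real.log (1/a) + K2*S2*a^(s/4)) := by
          refine ENNReal.ofReal_le_ofReal (le_of_eq ?_)
          ring
  calc ∫⁻ t in Set.Ico (0:ℝ) 1, F t ∂μ
      ≤ (∫⁻ t in T, F t ∂μ) + ∑' j, ∫⁻ t in S j, F t ∂μ := hsplit
    _ ≤ ENNReal.ofReal ((2:ℝ)^s*C/Real.log (1/a))
        + ENNReal.ofReal (K1*S1/Real.log (1/a) + K2*S2*a^(s/4)) := add_le_add hT hsum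
    _ ≤ ENNReal.ofReal (((2:ℝ)^s*C + K1*S1)/Real.log (1/a) + K2*S2*a^(s/4)) := by
        rw [← ENNReal.ofReal_add (by positivity) (by positivity)]
        refine ENNReal.ofReal_le_ofReal (le_of_eq ?_)
        ring


private lemma integral_fb_tendsto_zero_aux (p : ℝ) (hp : 0 < p)
    (μ : Measure ℝ) [IsFiniteMeasure μ]
    (hcar : ∃ C > 0, ∀ t ∈ Set.Ico (0:ℝ) 1,
      (μ (Set.Ico t 1)).toReal * Real.log (2 / (1 - t)) ≤ C * (1 - t) ^ (1/p)) :
    Tendsto (fun b : ℝ =>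
        ∫ t in Set.Ico (0:ℝ) 1, ((1 - b^2) / (1 - b*t)^2) ^ (1/p) ∂μ)
      (𝓝[<] (1:ℝ)) (𝓝 0) := by
  obtain ⟨C, hC, hcarC⟩ := hcar
  have hev : ∀ᶠ b in 𝓝[<] (1:ℝ), b ∈ Set.Ioo (1/2 : ℝ) 1 :=
    Ioo_mem_nhdsLT (by norm_num)
  set D1 : ℝ := (2:ℝ)^(1/p)*C + 2*((16:ℝ)^(1/p)*C) * (1 - ((2:ℝ)^(1/p))⁻¹)⁻¹ with hD1
  set D2 : ℝ := (16:ℝ)^(1/p)*C * (2:ℝ)^((1/p)/2) / Real.log 2 * (1 - ((2:ℝ)^((1/p)/2))⁻¹)⁻¹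
    with hD2
  have h1b : Tendsto (fun b : ℝ => 1 - b) (𝓝[<] (1:ℝ)) (𝓝[>] (0:ℝ)) := by
    apply tendsto_nhdsWithin_of_tendsto_nhds_of_eventually_within
    · have : Tendsto (fun b : ℝ => 1 - b) (𝓝 (1:ℝ)) (𝓝 0) := by
        have h := ((continuous_const (y := (1:ℝ))).sub continuous_id).tendsto (1:ℝ)
        simpa [Pi.sub_def] using h
      exact this.mono_left nhdsWithin_le_nhds
    · exact eventually_mem_nhdsWithin.mono (fun b (hb : b ∈ Set.Iio (1:ℝ)) => by
        simp only [Set.mem_Ioi]; simpa using hb)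
  have htop : Tendsto (fun b : ℝ => Real.log (1/(1-b))) (𝓝[<] (1:ℝ)) atTop := by
    have h2 : Tendsto (fun b : ℝ => (1-b)⁻¹) (𝓝[<] (1:ℝ)) atTop :=
      tendsto_inv_nhdsGT_zero.comp h1b
    have h3 := Real.tendsto_log_atTop.comp h2
    simp only [one_div]
    exact h3
  have hterm1 : Tendsto (fun b : ℝ => D1 / Real.log (1/(1-b))) (𝓝[<] (1:ℝ)) (𝓝 0) :=
    tendsto_const_nhds.div_atTop htop
  have hterm2 : Tendsto (fun b : ℝ => D2 * (1-b)^((1/p)/4)) (𝓝[<] (1:ℝ)) (𝓝 0) := by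
    have hc : ContinuousAt (fun x : ℝ => x^((1/p)/4)) 0 :=
      Real.continuousAt_rpow_const 0 _ (Or.inr (by positivity))
    have h0 : (0:ℝ)^((1/p)/4) = 0 := Real.zero_rpow (by positivity)
    have h3 : Tendsto (fun b : ℝ => (1-b)^((1/p)/4)) (𝓝[<] (1:ℝ)) (𝓝 0) := by
      have := hc.tendsto.comp (h1b.mono_right nhdsWithin_le_nhds)
      rw [h0] at this
      exact this
    have h4 := h3.const_mul D2
    simpa using h4
  have hg : Tendsto (fun b : ℝ => D1 / Real.log (1/(1-b)) + D2 * (1-b)^((1/p)/4))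
      (𝓝[<] (1:ℝ)) (𝓝 0) := by
    have := hterm1.add hterm2
    simpa using this
  refine squeeze_zero' ?_ ?_ hg
  · refine hev.mono (fun b hb => ?_)
    refine setIntegral_nonneg measurableSet_Ico (fun t _ => ?_)
    refine Real.rpow_nonneg (div_nonneg ?_ (sq_nonneg _)) _
    nlinarith [hb.1, hb.2]
  · exact hev.mono (fun b hb => key_bound p C hp hC μ hcarC hb.1 hb.2)


/-- if `μ` is a `1`-logarithmic `1/p`-Carleson measure then
`∫_{[0,1)} f_b dμ → 0` as `b → 1⁻`, where `f_b(t) = ((1-b²)/(1-bt)²)^{1/p}`. -/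
theorem integral_fb_tendsto_zero (p : ℝ) (hp : 0 < p)
    (μ : Measure ℝ) [IsFiniteMeasure μ] (hsupp : μ ((Set.Ico (0:ℝ) 1)ᶜ) = 0)
    (hcar : IsLogCarleson (1/p) μ) :
    Tendsto (fun b : ℝ =>
        ∫ t in Set.Ico (0:ℝ) 1, ((1 - b^2) / (1 - b*t)^2) ^ (1/p) ∂μ)
      (𝓝[<] (1:ℝ)) (𝓝 0) := by
  exact integral_fb_tendsto_zero_aux p hp μ hcar
end
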